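/- arXiv:1409.3470 — 5 statements merged into one kernel-verified Lean document; each statement's English description precedes it below -/
import Mathlib

section
/- Let f : X → X be a homeomorphism of a compact metric space X such that the restriction of f to its nonwandering set Ω(f) has the pseudo-orbit tracing property. If f admits a positively expansive Borel probability measure, then the topological entropy of f is positive. -/
open MeasureTheory Filter Set ENNReal

/-- `Φ_δ(x) = {y : d(f^i x, f^i y) ≤ δ for all i ∈ ℕ}`. -/
def phiSet {X : Type*} [MetricSpace X] (f : X → X) (δ : ℝ) (x : X) : Set X :=
  {y | ∀ i : ℕ, dist (f^[i] x) (f^[i] y) ≤ δ}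

/-- A Borel probability measure is positively expansive if there is an
expansivity constant `e > 0` with `μ (Φ_e x) = 0` for all `x`. -/
def IsPositivelyExpansive {X : Type*} [MetricSpace X] [MeasurableSpace X]
    (f : X → X) (μ : Measure X) : Prop :=
  ∃ e : ℝ, 0 < e ∧ ∀ x : X, μ (phiSet f e x) = 0

/-- `M_f(n, ε)`: the minimal number of `ε`-balls in the metric
`(x, y) ↦ max_{0 ≤ i ≤ n} d(f^i x, f^i y)` needed to cover `X`. -/
noncomputable def coverNum {X : Type*} [MetricSpace X] (f : X → X) (n : ℕ) (ε : ℝ) : ℕ :=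
  sInf {k : ℕ | ∃ S : Finset X, S.card = k ∧
    ∀ x : X, ∃ y ∈ S, ∀ i ≤ n, dist (f^[i] y) (f^[i] x) < ε}

/-- The topological entropy
`h(f) = lim_{ε → 0} limsup_{n → ∞} (1/n) log M_f(n, ε)`; since the inner
`limsup` is monotone as `ε` decreases, the limit is the supremum over `ε > 0`. -/
noncomputable def topEntropy {X : Type*} [MetricSpace X] (f : X → X) : ℝ≥0∞ :=
  ⨆ (ε : ℝ) (_ : 0 < ε),
    Filter.atTop.limsup fun n : ℕ => ENNReal.ofReal (Real.log (coverNum f n ε) / n)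

/-- The nonwandering set of `f`. -/
def nonWanderingSet {X : Type*} [TopologicalSpace X] (f : X → X) : Set X :=
  {x | ∀ U ∈ nhds x, ∃ n : ℕ, 0 < n ∧ (f^[n] '' U ∩ U).Nonempty}

/-- The `i`-th iterate of a homeomorphism, `i ∈ ℤ`. -/
noncomputable def iterZ {X : Type*} [TopologicalSpace X] (f : X ≃ₜ X) (i : ℤ) (x : X) : X :=
  if 0 ≤ i then (⇑f)^[i.toNat] x else (⇑f.symm)^[(-i).toNat] x

/-- The restriction of the homeomorphism `f` to the invariant set `S` has the
pseudo-orbit tracing property: for all `ε > 0` there is `δ > 0` such that every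
`δ`-pseudo-orbit lying in `S` is `ε`-shadowed by the orbit of a point of `S`. -/
def POTPOn {X : Type*} [MetricSpace X] (f : X ≃ₜ X) (S : Set X) : Prop :=
  ∀ ε > (0 : ℝ), ∃ δ > (0 : ℝ), ∀ x : ℤ → X, (∀ i : ℤ, x i ∈ S) →
    (∀ i : ℤ, dist (f (x i)) (x (i + 1)) ≤ δ) →
    ∃ y ∈ S, ∀ i : ℤ, dist (iterZ f i y) (x i) ≤ ε

section Aux

variable {X : Type*} [MetricSpace X]

/-- A `δ`-pseudo-orbit (indexed by `ℕ`) lying in `S`. -/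
def PseudoOn (f : X → X) (S : Set X) (δ : ℝ) (ξ : ℕ → X) : Prop :=
  (∀ t, ξ t ∈ S) ∧ ∀ t, dist (f (ξ t)) (ξ (t + 1)) ≤ δ

/-- A finite `κ`-chain in `S` from `u` to `w` (of length at least one). -/
def ChainOn (f : X → X) (S : Set X) (κ : ℝ) (u w : X) : Prop :=
  ∃ n : ℕ, 0 < n ∧ ∃ c : ℕ → X, c 0 = u ∧ c n = w ∧ (∀ i ≤ n, c i ∈ S) ∧
    ∀ i < n, dist (f (c i)) (c (i + 1)) ≤ κ

/-- All points of the pseudo-orbit are mutually chain-connected. -/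
def TrappedOn (f : X → X) (S : Set X) (κ : ℝ) (ξ : ℕ → X) : Prop :=
  ∀ s t : ℕ, ChainOn f S κ (ξ s) (ξ t)

/-- A branching configuration: two mutually chain-recurrent pseudo-orbits in `S`
which start `β`-close and separate by more than `E` at some time. -/
def BranchPair (f : X → X) (S : Set X) (δ' κ β E : ℝ) : Prop :=
  ∃ ξ ζ : ℕ → X, PseudoOn f S δ' ξ ∧ PseudoOn f S δ' ζ ∧
    TrappedOn f S κ ξ ∧ TrappedOn f S κ ζ ∧ dist (ξ 0) (ζ 0) ≤ β ∧
    ∃ N : ℕ, E < dist (ξ N) (ζ N)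

theorem chainOn_trans {f : X → X} {S : Set X} {κ : ℝ} {u w v : X}
    (h1 : ChainOn f S κ u w) (h2 : ChainOn f S κ w v) : ChainOn f S κ u v := by
  obtain ⟨n1, hn1, c1, hc10, hc1n, hc1m, hc1j⟩ := h1
  obtain ⟨n2, hn2, c2, hc20, hc2n, hc2m, hc2j⟩ := h2
  refine ⟨n1 + n2, by omega, fun i => if i ≤ n1 then c1 i else c2 (i - n1), by simp [hc10], ?_, ?_, ?_⟩
  · have h : ¬ (n1 + n2 ≤ n1) := by omega
    simp only [if_neg h]
    have : n1 + n2 - n1 = n2 := by omega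
    rw [this, hc2n]
  · intro i hi
    by_cases h : i ≤ n1
    · simp only [if_pos h]; exact hc1m i h
    · simp only [if_neg h]; exact hc2m (i - n1) (by omega)
  · intro i hi
    by_cases h : i + 1 ≤ n1
    · simp only [if_pos h, if_pos (by omega : i ≤ n1)]
      exact hc1j i (by omega)
    · by_cases h' : i ≤ n1
      · have hi1 : i = n1 := by omega
        simp only [if_pos h', if_neg h, hi1]
        have : c1 n1 = c2 0 := by rw [hc1n, hc20]
        rw [this]
        have := hc2j 0 (by omega)
        simpa [hi1] using this
      · simp only [if_neg h, if_neg h']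
        have : i + 1 - n1 = (i - n1) + 1 := by omega
        rw [this]
        exact hc2j (i - n1) (by omega)

theorem chainOn_single {f : X → X} {S : Set X} {κ : ℝ} {u w : X}
    (hu : u ∈ S) (hw : w ∈ S) (h : dist (f u) w ≤ κ) : ChainOn f S κ u w := by
  refine ⟨1, by omega, fun i => if i = 0 then u else w, by simp, by simp, ?_, ?_⟩
  · intro i hi
    rcases Nat.le_one_iff_eq_zero_or_eq_one.mp hi with h | h <;> simp [h, hu, hw]
  · intro i hi
    have : i = 0 := by omega
    simp [this, h]

theorem pseudoOn_chain {f : X → X} {S : Set X} {δ' κ : ℝ} {ξ : ℕ → X}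
    (hp : PseudoOn f S δ' ξ) (hδκ : δ' ≤ κ) {s t : ℕ} (hst : s < t) :
    ChainOn f S κ (ξ s) (ξ t) := by
  induction t with
  | zero => omega
  | succ t ih =>
    rcases Nat.lt_succ_iff_lt_or_eq.mp hst with h | h
    · exact chainOn_trans (ih h)
        (chainOn_single (hp.1 t) (hp.1 (t+1)) (le_trans (hp.2 t) hδκ))
    · subst h
      exact chainOn_single (hp.1 s) (hp.1 (s+1)) (le_trans (hp.2 s) hδκ)

theorem pseudoOn_shift {f : X → X} {S : Set X} {δ' : ℝ} {ξ : ℕ → X}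
    (hp : PseudoOn f S δ' ξ) (T : ℕ) : PseudoOn f S δ' (fun t => ξ (T + t)) := by
  refine ⟨fun t => hp.1 _, fun t => ?_⟩
  have h := hp.2 (T + t)
  rw [Nat.add_assoc] at h
  exact h

theorem trappedOn_shift {f : X → X} {S : Set X} {κ : ℝ} {ξ : ℕ → X}
    (hp : TrappedOn f S κ ξ) (T : ℕ) : TrappedOn f S κ (fun t => ξ (T + t)) :=
  fun s t => hp (T + s) (T + t)

end Aux

section Compact

variable {X : Type*} [MetricSpace X] [CompactSpace X]

/-- Uniform modulus of continuity for a continuous self-map of a compact space. -/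
theorem modulus {f : X → X} (hf : Continuous f) {η : ℝ} (hη : 0 < η) :
    ∃ γ > 0, ∀ x y : X, dist x y ≤ γ → dist (f x) (f y) ≤ η := by
  have h := CompactSpace.uniformContinuous_of_continuous hf
  rw [Metric.uniformContinuous_iff] at h
  obtain ⟨δ, hδ, hh⟩ := h η hη
  exact ⟨δ/2, by positivity, fun x y hxy => le_of_lt (hh (lt_of_le_of_lt hxy (by linarith)))⟩

/-- Uniform modulus for the family of iterates `f^[i]`, `i ≤ T`. -/
theorem modulus_iter {f : X → X} (hf : Continuous f) (T : ℕ) {η : ℝ} (hη : 0 < η) :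
    ∃ γ > 0, ∀ x y : X, dist x y ≤ γ → ∀ i ≤ T, dist (f^[i] x) (f^[i] y) ≤ η := by
  induction T with
  | zero =>
    refine ⟨η, hη, fun x y h i hi => ?_⟩
    interval_cases i
    simpa using h
  | succ T ih =>
    obtain ⟨γ, hγ, hmod⟩ := ih
    obtain ⟨γ', hγ', hmod'⟩ := modulus (hf.iterate (T+1)) hη
    refine ⟨min γ γ', by positivity, fun x y h i hi => ?_⟩
    rcases Nat.lt_succ_iff_lt_or_eq.mp (Nat.lt_succ_of_le hi) with h' | h'
    · exact hmod x y (le_trans h (min_le_left _ _)) i (by omega)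
    · subst h'
      exact hmod' x y (le_trans h (min_le_right _ _))

/-- A cluster point of a forward orbit along a strictly increasing time sequence
is nonwandering. -/
theorem cluster_mem_nonWandering {f : X → X} {x w : X} {t : ℕ → ℕ}
    (ht : StrictMono t) (hw : Tendsto (fun k => f^[t k] x) atTop (nhds w)) :
    w ∈ nonWanderingSet f := by
  intro U hU
  have h2 : ∀ᶠ k in atTop, f^[t k] x ∈ U := hw.eventually (eventually_mem_nhds_iff.mpr (by simpa using hU)) |>.mono (fun k hk => mem_of_mem_nhds hk)
  rw [eventually_atTop] at h2
  obtain ⟨K, hK⟩ := h2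
  refine ⟨t (K+1) - t K, by have := ht (by omega : K < K + 1); omega, ⟨f^[t (K+1)] x, ?_, hK (K+1) (by omega)⟩⟩
  refine ⟨f^[t K] x, hK K le_rfl, ?_⟩
  rw [← Function.iterate_add_apply]
  congr 1
  have := ht (by omega : K < K + 1)
  omega

/-- Every forward orbit eventually stays `τ`-near the nonwandering set. -/
theorem eventually_near_nonWandering {f : X → X} (x : X)
    {τ : ℝ} (hτ : 0 < τ) :
    ∃ T : ℕ, ∀ t ≥ T, ∃ z ∈ nonWanderingSet f, dist (f^[t] x) z ≤ τ := by
  by_contra hcon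
  push_neg at hcon
  -- build a strictly monotone sequence of bad times
  have hstep : ∀ T : ℕ, ∃ t ≥ T, ∀ z ∈ nonWanderingSet f, τ < dist (f^[t] x) z := by
    intro T
    obtain ⟨t, ht, z⟩ := hcon T
    exact ⟨t, ht, z⟩
  choose g hg1 hg2 using hstep
  let u : ℕ → ℕ := fun k => Nat.rec (g 0) (fun _ p => g (p + 1)) k
  have hu : StrictMono u := by
    have : ∀ k, u k < u (k+1) := fun k => lt_of_lt_of_le (Nat.lt_succ_self _) (hg1 (u k + 1))
    exact strictMono_nat_of_lt_succ this
  have hbad : ∀ k, ∀ z ∈ nonWanderingSet f, τ < dist (f^[u k] x) z := by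
    intro k
    cases k with
    | zero => exact hg2 0
    | succ k => exact hg2 (u k + 1)
  obtain ⟨w, _, φ, hφ, hconv⟩ := isCompact_univ.tendsto_subseq
    (x := fun k => f^[u k] x) (fun k => mem_univ _)
  have hwΩ : w ∈ nonWanderingSet f := cluster_mem_nonWandering (hu.comp hφ) hconv
  have : ∀ᶠ k in atTop, dist (f^[u (φ k)] x) w < τ :=
    (Metric.tendsto_nhds.mp hconv) τ hτ
  rw [eventually_atTop] at this
  obtain ⟨K, hK⟩ := this
  exact absurd (hK K le_rfl) (not_lt.mpr (le_of_lt (hbad (φ K) w hwΩ)))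

/-- Finite `γ`-net of a compact space. -/
theorem finite_net [Nonempty X] {γ : ℝ} (hγ : 0 < γ) :
    ∃ F : Finset X, F.Nonempty ∧ ∀ x : X, ∃ y ∈ F, dist x y ≤ γ := by
  obtain ⟨F, hF⟩ := isCompact_univ.elim_finite_subcover (fun y : X => Metric.ball y γ)
    (fun y => Metric.isOpen_ball) (fun x _ => mem_iUnion.mpr ⟨x, by simp [hγ]⟩)
  have hx : ∀ x : X, ∃ y ∈ F, dist x y ≤ γ := by
    intro x
    have := hF (mem_univ x)
    rw [mem_iUnion₂] at this
    obtain ⟨y, hy, hxy⟩ := this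
    exact ⟨y, hy, le_of_lt (by simpa [Metric.mem_ball] using hxy)⟩
  obtain ⟨x⟩ := ‹Nonempty X›
  obtain ⟨y, hy, -⟩ := hx x
  exact ⟨F, ⟨y, hy⟩, hx⟩

end Compact

section Trap

variable {X : Type*} [MetricSpace X] [CompactSpace X]

/-- Every pseudo-orbit has a tail all whose points are mutually chain-connected. -/
theorem exists_trapped_shift [Nonempty X] {f : X → X} {S : Set X} {δ' κ γn : ℝ}
    (hγ : 0 < γn) (hδκ : δ' ≤ κ)
    (hmod : ∀ x y : X, dist x y ≤ 2*γn → dist (f x) (f y) + δ' ≤ κ)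
    {ξ : ℕ → X} (hp : PseudoOn f S δ' ξ) :
    ∃ T : ℕ, TrappedOn f S κ (fun t => ξ (T + t)) := by
  obtain ⟨F, hFne, hF⟩ := finite_net (X := X) hγ
  choose nr hnr1 hnr2 using hF
  let g : ℕ → {y // y ∈ F} := fun t => ⟨nr (ξ t), hnr1 (ξ t)⟩
  obtain ⟨p, hfib⟩ := Finite.exists_infinite_fiber g
  have hfib' : (g ⁻¹' {p}).Infinite := Set.infinite_coe_iff.mp hfib
  obtain ⟨t₁, ht₁⟩ := hfib'.nonempty
  refine ⟨t₁ + 1, ?_⟩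
  intro s t
  simp only
  set s' := t₁ + 1 + s with hs'
  set t' := t₁ + 1 + t with ht'
  obtain ⟨tj, htj, htjgt⟩ := hfib'.exists_gt (max s' t')
  -- distance between two fiber points
  have hfd : dist (ξ tj) (ξ t₁) ≤ 2*γn := by
    have h1 : dist (ξ tj) (nr (ξ tj)) ≤ γn := hnr2 (ξ tj)
    have h2 : dist (ξ t₁) (nr (ξ t₁)) ≤ γn := hnr2 (ξ t₁)
    have he : nr (ξ tj) = nr (ξ t₁) := by
      have : g tj = g t₁ := by
        have h3 : g tj = p := htj
        have h4 : g t₁ = p := ht₁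
        rw [h3, h4]
      simpa [g, Subtype.ext_iff] using this
    calc dist (ξ tj) (ξ t₁) ≤ dist (ξ tj) (nr (ξ tj)) + dist (nr (ξ t₁)) (ξ t₁) := by
            rw [he]; exact dist_triangle _ _ _
      _ ≤ 2*γn := by rw [dist_comm (nr (ξ t₁))]; linarith
  have hstep : ChainOn f S κ (ξ tj) (ξ (t₁ + 1)) := by
    refine chainOn_single (hp.1 _) (hp.1 _) ?_
    calc dist (f (ξ tj)) (ξ (t₁ + 1)) ≤ dist (f (ξ tj)) (f (ξ t₁)) + dist (f (ξ t₁)) (ξ (t₁ + 1)) :=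
          dist_triangle _ _ _
      _ ≤ dist (f (ξ tj)) (f (ξ t₁)) + δ' := by linarith [hp.2 t₁]
      _ ≤ κ := hmod _ _ hfd
  have hfwd1 : ChainOn f S κ (ξ s') (ξ tj) :=
    pseudoOn_chain hp hδκ (lt_of_le_of_lt (le_max_left _ _) htjgt)
  rcases Nat.lt_or_ge (t₁ + 1) t' with h | h
  · exact chainOn_trans (chainOn_trans hfwd1 hstep) (pseudoOn_chain hp hδκ h)
  · have : t' = t₁ + 1 := by omega
    rw [this]
    exact chainOn_trans hfwd1 hstep

end Trap

section Horn1

variable {X : Type*} [MetricSpace X] [CompactSpace X] [MeasurableSpace X] [BorelSpace X]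

theorem exists_phi_pos_of_no_branch [Nonempty X]
    (f : X ≃ₜ X) (μ : Measure X) [IsProbabilityMeasure μ]
    {e δ' κ β τ γn : ℝ}
    (he : 0 < e) (hβ : 0 < β) (hτ : 0 < τ) (hγn : 0 < γn) (hδ'κ : δ' ≤ κ)
    (hmodnet : ∀ x y : X, dist x y ≤ 2*γn → dist (f x) (f y) + δ' ≤ κ)
    (hτj : ∀ x y : X, dist x y ≤ τ → dist (f x) (f y) + τ ≤ δ')
    (hstart : 2*τ + β/4 ≤ β)
    (hβe : β/4 ≤ e)
    (hfin : 2*τ + e/2 ≤ e)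
    (hQ : ¬ BranchPair ⇑f (nonWanderingSet ⇑f) δ' κ β (e/2)) :
    ∃ x : X, 0 < μ (phiSet (⇑f) e x) := by
  classical
  -- projection of orbit tails to the nonwandering set
  have hev : ∀ x : X, ∃ T : ℕ, ∀ t ≥ T, ∃ z ∈ nonWanderingSet (⇑f), dist ((⇑f)^[t] x) z ≤ τ :=
    fun x => eventually_near_nonWandering x hτ
  choose T₁ hT₁ using hev
  have hproj : ∀ (x : X) (t : ℕ), ∃ z, z ∈ nonWanderingSet (⇑f) ∧
      dist ((⇑f)^[T₁ x + t] x) z ≤ τ := by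
    intro x t
    obtain ⟨z, hz1, hz2⟩ := hT₁ x (T₁ x + t) (by omega)
    exact ⟨z, hz1, hz2⟩
  choose P hP1 hP2 using hproj
  have hpseudo : ∀ x : X, PseudoOn (⇑f) (nonWanderingSet (⇑f)) δ' (P x) := by
    intro x
    refine ⟨fun t => hP1 x t, fun t => ?_⟩
    have h1 : dist (P x t) ((⇑f)^[T₁ x + t] x) ≤ τ := by
      rw [dist_comm]; exact hP2 x t
    have h2 := hτj _ _ h1
    have h3 : (⇑f)^[T₁ x + (t+1)] x = f ((⇑f)^[T₁ x + t] x) := by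
      rw [show T₁ x + (t+1) = (T₁ x + t) + 1 by omega, Function.iterate_succ_apply']
    calc dist (f (P x t)) (P x (t+1))
        ≤ dist (f (P x t)) (f ((⇑f)^[T₁ x + t] x)) + dist (f ((⇑f)^[T₁ x + t] x)) (P x (t+1)) :=
          dist_triangle _ _ _
      _ ≤ dist (f (P x t)) (f ((⇑f)^[T₁ x + t] x)) + τ := by
          rw [← h3]; linarith [hP2 x (t+1)]
      _ ≤ δ' := by linarith
  have htrap : ∀ x : X, ∃ T : ℕ, TrappedOn (⇑f) (nonWanderingSet (⇑f)) κ (fun t => P x (T + t)) :=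
    fun x => exists_trapped_shift hγn hδ'κ hmodnet (hpseudo x)
  choose T₂ hT₂ using htrap
  -- choose a time horizon capturing measure ≥ 1/2
  obtain ⟨T, hTmeas⟩ : ∃ T : ℕ, (1:ℝ≥0∞)/2 ≤ μ {x : X | T₁ x + T₂ x ≤ T} := by
    set A : ℕ → Set X := fun T => {x : X | T₁ x + T₂ x ≤ T} with hA
    set H : ℕ → Set X := fun T => ⋂ (S : ℕ) (_ : T ≤ S), toMeasurable μ (A S) with hH
    have hAH : ∀ T, A T ⊆ H T := by
      intro T x hx
      rw [hH, mem_iInter₂]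
      intro S hS
      exact subset_toMeasurable μ (A S) (le_trans hx hS)
    have hHA : ∀ T, μ (H T) ≤ μ (A T) := by
      intro T
      calc μ (H T) ≤ μ (toMeasurable μ (A T)) :=
            measure_mono (by rw [hH]; exact iInter₂_subset T le_rfl)
        _ = μ (A T) := measure_toMeasurable _
    have hHmono : Monotone H := by
      intro T T' hTT'
      rw [hH]
      exact fun x hx => by
        rw [mem_iInter₂] at *
        intro S hS
        exact hx S (le_trans hTT' hS)
    have huniv : (⋃ T, H T) = univ := by
      apply eq_univ_of_forall
      intro x
      exact mem_iUnion.mpr ⟨T₁ x + T₂ x, hAH _ (by simp [hA])⟩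
    have htend := tendsto_measure_iUnion_atTop (μ := μ) hHmono
    rw [huniv] at htend
    have h1 : μ (univ : Set X) = 1 := measure_univ
    rw [h1] at htend
    have : ∀ᶠ T in atTop, (1:ℝ≥0∞)/2 ≤ μ (H T) := by
      apply Filter.Tendsto.eventually_const_le _ htend
      exact ENNReal.half_lt_self one_ne_zero one_ne_top
    rw [eventually_atTop] at this
    obtain ⟨T, hT⟩ := this
    exact ⟨T, le_trans (hT T le_rfl) (hHA T)⟩
  -- a positive measure cell
  obtain ⟨γc, hγc, hmodc⟩ := modulus_iter (f.continuous) T (by positivity : (0:ℝ) < β/8)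
  obtain ⟨F, -, hF⟩ := finite_net (X := X) (by positivity : (0:ℝ) < γc/2)
  set A := {x : X | T₁ x + T₂ x ≤ T} with hAdef
  set C : X → Set X := fun y => A ∩ {x | dist x y ≤ γc/2} with hCdef
  have hcover : A ⊆ ⋃ y ∈ F, C y := by
    intro x hx
    obtain ⟨y, hy, hxy⟩ := hF x
    exact mem_biUnion hy ⟨hx, hxy⟩
  obtain ⟨y₀, -, hy₀pos⟩ : ∃ y ∈ F, 0 < μ (C y) := by
    by_contra hcon
    push_neg at hcon
    have : μ A ≤ ∑ y ∈ F, μ (C y) := le_trans (measure_mono hcover) (measure_biUnion_finset_le F C)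
    have hz : ∑ y ∈ F, μ (C y) = 0 := by
      apply Finset.sum_eq_zero
      intro y hy
      exact le_antisymm (hcon y hy) zero_le
    rw [hz] at this
    have := le_trans hTmeas this
    simp at this
  obtain ⟨x₀, hx₀⟩ : (C y₀).Nonempty := nonempty_of_measure_ne_zero hy₀pos.ne'
  refine ⟨x₀, lt_of_lt_of_le hy₀pos (measure_mono ?_)⟩
  -- the cell is contained in the Φ-set of x₀
  intro x' hx'
  intro i
  have hpair : dist x₀ x' ≤ γc := by
    calc dist x₀ x' ≤ dist x₀ y₀ + dist x' y₀ := dist_triangle_right _ _ _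
      _ ≤ γc/2 + γc/2 := add_le_add hx₀.2 hx'.2
      _ = γc := by ring
  have hearly : ∀ j ≤ T, dist ((⇑f)^[j] x₀) ((⇑f)^[j] x') ≤ β/8 := hmodc x₀ x' hpair
  rcases le_or_gt i T with hi | hi
  · exact le_trans (hearly i hi) (by linarith)
  · -- late times: compare the two projected pseudo-orbits
    have hTx₀ : T₁ x₀ + T₂ x₀ ≤ T := hx₀.1
    have hTx' : T₁ x' + T₂ x' ≤ T := hx'.1
    set η : ℕ → X := fun u => P x₀ ((T - T₁ x₀) + u) with hη
    set η' : ℕ → X := fun u => P x' ((T - T₁ x') + u) with hη'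
    have htrack : ∀ u : ℕ, dist (η u) ((⇑f)^[T + u] x₀) ≤ τ := by
      intro u
      rw [hη, dist_comm]
      have := hP2 x₀ ((T - T₁ x₀) + u)
      rwa [show T₁ x₀ + ((T - T₁ x₀) + u) = T + u by omega] at this
    have htrack' : ∀ u : ℕ, dist (η' u) ((⇑f)^[T + u] x') ≤ τ := by
      intro u
      rw [hη', dist_comm]
      have := hP2 x' ((T - T₁ x') + u)
      rwa [show T₁ x' + ((T - T₁ x') + u) = T + u by omega] at this
    have htr : TrappedOn (⇑f) (nonWanderingSet (⇑f)) κ η := by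
      intro s t
      have h0 := hT₂ x₀ ((T - T₁ x₀) - T₂ x₀ + s) ((T - T₁ x₀) - T₂ x₀ + t)
      simp only at h0
      have e1 : T₂ x₀ + ((T - T₁ x₀) - T₂ x₀ + s) = (T - T₁ x₀) + s := by omega
      have e2 : T₂ x₀ + ((T - T₁ x₀) - T₂ x₀ + t) = (T - T₁ x₀) + t := by omega
      rw [e1, e2] at h0
      exact h0
    have htr' : TrappedOn (⇑f) (nonWanderingSet (⇑f)) κ η' := by
      intro s t
      have h0 := hT₂ x' ((T - T₁ x') - T₂ x' + s) ((T - T₁ x') - T₂ x' + t)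
      simp only at h0
      have e1 : T₂ x' + ((T - T₁ x') - T₂ x' + s) = (T - T₁ x') + s := by omega
      have e2 : T₂ x' + ((T - T₁ x') - T₂ x' + t) = (T - T₁ x') + t := by omega
      rw [e1, e2] at h0
      exact h0
    have hps : PseudoOn (⇑f) (nonWanderingSet (⇑f)) δ' η := pseudoOn_shift (hpseudo x₀) _
    have hps' : PseudoOn (⇑f) (nonWanderingSet (⇑f)) δ' η' := pseudoOn_shift (hpseudo x') _
    have hstart0 : dist (η 0) (η' 0) ≤ β := by
      calc dist (η 0) (η' 0)
          ≤ dist (η 0) ((⇑f)^[T + 0] x₀) + dist ((⇑f)^[T + 0] x₀) ((⇑f)^[T + 0] x')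
              + dist ((⇑f)^[T + 0] x') (η' 0) := dist_triangle4 _ _ _ _
        _ ≤ τ + β/8 + τ := by
            have h1 := htrack 0
            have h2 := htrack' 0
            rw [dist_comm] at h2
            have h3 := hearly T le_rfl
            rw [show T + 0 = T by omega]
            exact add_le_add (add_le_add h1 h3) h2
        _ ≤ β := by linarith
    have hclose : ∀ N : ℕ, dist (η N) (η' N) ≤ e/2 := by
      intro N
      by_contra hN
      push_neg at hN
      exact hQ ⟨η, η', hps, hps', htr, htr', hstart0, N, hN⟩
    have hi' : i = T + (i - T) := by omega
    rw [hi']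
    calc dist ((⇑f)^[T + (i-T)] x₀) ((⇑f)^[T + (i-T)] x')
        ≤ dist ((⇑f)^[T + (i-T)] x₀) (η (i-T)) + dist (η (i-T)) (η' (i-T))
            + dist (η' (i-T)) ((⇑f)^[T + (i-T)] x') := dist_triangle4 _ _ _ _
      _ ≤ τ + e/2 + τ := by
          have h1 := htrack (i-T)
          rw [dist_comm] at h1
          exact add_le_add (add_le_add h1 (hclose (i-T))) (htrack' (i-T))
      _ ≤ e := by linarith

end Horn1

section Horn2

variable {X : Type*} [MetricSpace X] [CompactSpace X]

theorem iterZ_natCast {X : Type*} [TopologicalSpace X] (f : X ≃ₜ X) (m : ℕ) (y : X) :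
    iterZ f (m : ℤ) y = (⇑f)^[m] y := by
  simp [iterZ]

theorem coverSet_nonempty [Nonempty X] {f : X → X} (hf : Continuous f) (n : ℕ) {ε : ℝ}
    (hε : 0 < ε) :
    {k : ℕ | ∃ S : Finset X, S.card = k ∧
      ∀ x : X, ∃ y ∈ S, ∀ i ≤ n, dist (f^[i] y) (f^[i] x) < ε}.Nonempty := by
  obtain ⟨γ, hγ, hm⟩ := modulus_iter hf n (half_pos hε)
  obtain ⟨F, -, hF⟩ := finite_net (X := X) hγ
  refine ⟨F.card, F, rfl, fun x => ?_⟩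
  obtain ⟨y, hy, hxy⟩ := hF x
  exact ⟨y, hy, fun i hi => lt_of_le_of_lt (hm y x (by rw [dist_comm]; exact hxy) i hi)
    (by linarith)⟩

theorem coverNum_lower_of_branch [Nonempty X]
    (f : X ≃ₜ X) {e δP δ' κ β : ℝ}
    (he : 0 < e)
    (hshad : ∀ x : ℤ → X, (∀ i : ℤ, x i ∈ nonWanderingSet (⇑f)) →
      (∀ i : ℤ, dist (f (x i)) (x (i + 1)) ≤ δP) →
      ∃ y, ∀ i : ℤ, dist (iterZ f i y) (x i) ≤ e/8)
    (hδ'κ : δ' ≤ κ) (hκβ : κ + β ≤ δP)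
    (hQ : BranchPair (⇑f) (nonWanderingSet (⇑f)) δ' κ β (e/2)) :
    ∃ L : ℕ, 0 < L ∧ ∀ k n : ℕ, k * L ≤ n → 2^k ≤ coverNum (⇑f) n (e/16) := by
  classical
  obtain ⟨ξ, ζ, hpξ, hpζ, htξ, htζ, hβ0, N, hsep⟩ := hQ
  have hβnn : (0:ℝ) ≤ β := le_trans dist_nonneg hβ0
  have hκnn : (0:ℝ) ≤ κ := by
    have := hpξ.2 0
    have h0 := dist_nonneg (x := f (ξ 0)) (y := ξ 1)
    linarith [le_trans (le_trans h0 this) hδ'κ]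
  obtain ⟨nA, hnA, cA, hcA0, hcAn, hcAm, hcAj⟩ := htξ N 0
  obtain ⟨nB, hnB, cB, hcB0, hcBn, hcBm, hcBj⟩ := htζ N 0
  set a := N + nA with ha
  set b := N + nB with hb
  have hapos : 0 < a := by omega
  have hbpos : 0 < b := by omega
  set A : ℕ → X := fun r => if r ≤ N then ξ r else cA (r - N) with hAdef
  set B : ℕ → X := fun r => if r ≤ N then ζ r else cB (r - N) with hBdef
  have hA0 : A 0 = ξ 0 := by simp [hAdef]
  have hB0 : B 0 = ζ 0 := by simp [hBdef]
  have hAN : A N = ξ N := by simp [hAdef]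
  have hBN : B N = ζ N := by simp [hBdef]
  have hAc : ∀ r, N ≤ r → A r = cA (r - N) := by
    intro r hr
    rcases eq_or_lt_of_le hr with h | h
    · simp [hAdef, ← h, hcA0]
    · simp [hAdef, Nat.not_le.mpr h, Nat.le_of_lt h]
  have hBc : ∀ r, N ≤ r → B r = cB (r - N) := by
    intro r hr
    rcases eq_or_lt_of_le hr with h | h
    · simp [hBdef, ← h, hcB0]
    · simp [hBdef, Nat.not_le.mpr h, Nat.le_of_lt h]
  have hAmem : ∀ r, r < a → A r ∈ nonWanderingSet (⇑f) := by
    intro r hr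
    by_cases h : r ≤ N
    · simp only [hAdef, if_pos h]; exact hpξ.1 r
    · rw [hAc r (by omega)]; exact hcAm (r - N) (by omega)
  have hBmem : ∀ r, r < b → B r ∈ nonWanderingSet (⇑f) := by
    intro r hr
    by_cases h : r ≤ N
    · simp only [hBdef, if_pos h]; exact hpζ.1 r
    · rw [hBc r (by omega)]; exact hcBm (r - N) (by omega)
  have hAstep : ∀ r, r + 1 < a → dist (f (A r)) (A (r+1)) ≤ κ := by
    intro r hr
    by_cases h : r + 1 ≤ N
    · simp only [hAdef, if_pos h, if_pos (by omega : r ≤ N)]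
      exact le_trans (hpξ.2 r) hδ'κ
    · have hrN : N ≤ r := by omega
      rw [hAc r hrN, hAc (r+1) (by omega)]
      have : r + 1 - N = (r - N) + 1 := by omega
      rw [this]
      exact hcAj (r - N) (by omega)
  have hBstep : ∀ r, r + 1 < b → dist (f (B r)) (B (r+1)) ≤ κ := by
    intro r hr
    by_cases h : r + 1 ≤ N
    · simp only [hBdef, if_pos h, if_pos (by omega : r ≤ N)]
      exact le_trans (hpζ.2 r) hδ'κ
    · have hrN : N ≤ r := by omega
      rw [hBc r hrN, hBc (r+1) (by omega)]
      have : r + 1 - N = (r - N) + 1 := by omega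
      rw [this]
      exact hcBj (r - N) (by omega)
  have hAwrap : dist (f (A (a-1))) (ξ 0) ≤ κ := by
    rw [hAc (a-1) (by omega), show a - 1 - N = nA - 1 by omega]
    have := hcAj (nA - 1) (by omega)
    rwa [show nA - 1 + 1 = nA by omega, hcAn] at this
  have hBwrap : dist (f (B (b-1))) (ζ 0) ≤ κ := by
    rw [hBc (b-1) (by omega), show b - 1 - N = nB - 1 by omega]
    have := hcBj (nB - 1) (by omega)
    rwa [show nB - 1 + 1 = nB by omega, hcBn] at this
  set L := a * b with hL
  have hLpos : 0 < L := Nat.mul_pos hapos hbpos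
  have haL : a ≤ L := Nat.le_mul_of_pos_right a hbpos
  have hNa : N < a := by omega
  have hNb : N < b := by omega
  have hNL : N < L := lt_of_lt_of_le hNa haL
  set blk : Bool → ℕ → X := fun c r => cond c (B (r % b)) (A (r % a)) with hblkdef
  have hblkmem : ∀ c r, blk c r ∈ nonWanderingSet (⇑f) := by
    intro c r
    cases c
    · exact hAmem _ (Nat.mod_lt _ hapos)
    · exact hBmem _ (Nat.mod_lt _ hbpos)
  have hblk0A : blk false 0 = ξ 0 := by
    show A (0 % a) = ξ 0
    rw [Nat.zero_mod]; exact hA0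
  have hblk0B : blk true 0 = ζ 0 := by
    show B (0 % b) = ζ 0
    rw [Nat.zero_mod]; exact hB0
  have hsuccmod : ∀ m r : ℕ, 0 < m → (r % m + 1 < m → (r+1) % m = r % m + 1) ∧
      (r % m = m - 1 → (r+1) % m = 0) := by
    intro m r hm
    constructor
    · intro h
      rw [Nat.add_mod]
      have h1m : 1 % m = 1 := Nat.mod_eq_of_lt (by omega)
      rw [h1m, Nat.mod_eq_of_lt h]
    · intro h
      rw [Nat.add_mod, h]
      rcases Nat.eq_or_lt_of_le hm with h1 | h1
      · simp [← h1]
      · have h1m : 1 % m = 1 := Nat.mod_eq_of_lt (by omega)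
        rw [h1m, show m - 1 + 1 = m by omega, Nat.mod_self]
  have hmodLa : (L-1) % a = a - 1 := by
    have h8 : L = a * (b-1) + a := by
      have hb1 : b = (b-1) + 1 := by omega
      calc L = a * b := hL
        _ = a * ((b-1) + 1) := by rw [← hb1]
        _ = a * (b-1) + a := by ring
    have h9 : L - 1 = (a-1) + a * (b-1) := by omega
    rw [h9, Nat.add_mul_mod_self_left, Nat.mod_eq_of_lt (by omega)]
  have hmodLb : (L-1) % b = b - 1 := by
    have h8 : L = b * (a-1) + b := by
      have ha1 : a = (a-1) + 1 := by omega
      calc L = a * b := hL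
        _ = ((a-1) + 1) * b := by rw [← ha1]
        _ = b * (a-1) + b := by ring
    have h9 : L - 1 = (b-1) + b * (a-1) := by omega
    rw [h9, Nat.add_mul_mod_self_left, Nat.mod_eq_of_lt (by omega)]
  have hblkendA : dist (f (blk false (L-1))) (ξ 0) ≤ κ := by
    show dist (f (A ((L-1) % a))) (ξ 0) ≤ κ
    rw [hmodLa]; exact hAwrap
  have hblkendB : dist (f (blk true (L-1))) (ζ 0) ≤ κ := by
    show dist (f (B ((L-1) % b))) (ζ 0) ≤ κ
    rw [hmodLb]; exact hBwrap
  have hblkbound : ∀ c c', dist (f (blk c (L-1))) (blk c' 0) ≤ κ + β := by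
    intro c c'
    cases c' <;> cases c
    · rw [hblk0A]; linarith [hblkendA]
    · rw [hblk0A]
      calc dist (f (blk true (L-1))) (ξ 0)
          ≤ dist (f (blk true (L-1))) (ζ 0) + dist (ζ 0) (ξ 0) := dist_triangle _ _ _
        _ ≤ κ + β := by
            rw [dist_comm (ζ 0)]
            exact add_le_add hblkendB hβ0
    · rw [hblk0B]
      calc dist (f (blk false (L-1))) (ζ 0)
          ≤ dist (f (blk false (L-1))) (ξ 0) + dist (ξ 0) (ζ 0) := dist_triangle _ _ _
        _ ≤ κ + β := add_le_add hblkendA hβ0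
    · rw [hblk0B]; linarith [hblkendB]
  have hblkstep : ∀ c r, r + 1 < L → dist (f (blk c r)) (blk c (r+1)) ≤ κ := by
    intro c r hr
    cases c
    · show dist (f (A (r % a))) (A ((r+1) % a)) ≤ κ
      by_cases h : r % a + 1 < a
      · rw [(hsuccmod a r hapos).1 h]
        exact hAstep _ h
      · have hq : r % a = a - 1 := by
          have := Nat.mod_lt r hapos
          omega
        rw [(hsuccmod a r hapos).2 hq, hq, hA0]
        exact hAwrap
    · show dist (f (B (r % b))) (B ((r+1) % b)) ≤ κ
      by_cases h : r % b + 1 < b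
      · rw [(hsuccmod b r hbpos).1 h]
        exact hBstep _ h
      · have hq : r % b = b - 1 := by
          have := Nat.mod_lt r hbpos
          omega
        rw [(hsuccmod b r hbpos).2 hq, hq, hB0]
        exact hBwrap
  -- the ℤ-indexed concatenated pseudo-orbits
  set sel : (ℕ → Bool) → ℤ → Bool := fun s j => if 0 ≤ j then s j.toNat else false with hseldef
  set π : (ℕ → Bool) → ℤ → X := fun s t => blk (sel s (t / (L:ℤ))) ((t % (L:ℤ)).toNat) with hπdef
  have hLZ : ((L:ℤ)) ≠ 0 := by exact_mod_cast hLpos.ne'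
  have hLZpos : (0:ℤ) < (L:ℤ) := by exact_mod_cast hLpos
  have hπmem : ∀ s i, π s i ∈ nonWanderingSet (⇑f) := fun s i => hblkmem _ _
  have hπjump : ∀ s i, dist (f (π s i)) (π s (i + 1)) ≤ δP := by
    intro s i
    have hdm := Int.mul_ediv_add_emod i (L:ℤ)
    set q := i / (L:ℤ) with hq
    set r := i % (L:ℤ) with hr
    have hr0 : 0 ≤ r := Int.emod_nonneg i hLZ
    have hrL : r < L := Int.emod_lt_of_pos i hLZpos
    by_cases hcase : r + 1 < (L:ℤ)
    · have hisucc : i + 1 = (r + 1) + (L:ℤ) * q := by linarith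
      have hmod1 : (i+1) % (L:ℤ) = r + 1 := by
        rw [hisucc, Int.add_mul_emod_self_left]
        exact Int.emod_eq_of_lt (by omega) hcase
      have hdiv1 : (i+1) / (L:ℤ) = q := by
        rw [hisucc, Int.add_mul_ediv_left _ _ hLZ, Int.ediv_eq_zero_of_lt (by omega) hcase,
          zero_add]
      have htn : (r+1).toNat = r.toNat + 1 := by omega
      have h2 : r.toNat + 1 < L := by omega
      have hgoal : π s (i+1) = blk (sel s q) (r.toNat + 1) := by
        show blk (sel s ((i+1) / (L:ℤ))) (((i+1) % (L:ℤ)).toNat) = _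
        rw [hmod1, hdiv1, htn]
      have hcur : π s i = blk (sel s q) r.toNat := rfl
      rw [hcur, hgoal]
      exact le_trans (hblkstep _ _ h2) (by linarith)
    · have hreq : r = (L:ℤ) - 1 := by omega
      have hmul : (L:ℤ) * (q+1) = (L:ℤ)*q + L := by ring
      have hisucc : i + 1 = 0 + (L:ℤ) * (q + 1) := by
        rw [hmul]; linarith
      have hmod1 : (i+1) % (L:ℤ) = 0 := by
        rw [hisucc, Int.add_mul_emod_self_left]
        simp
      have hdiv1 : (i+1) / (L:ℤ) = q + 1 := by
        rw [hisucc, Int.add_mul_ediv_left _ _ hLZ]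
        simp
      have htn : r.toNat = L - 1 := by omega
      have hgoal : π s (i+1) = blk (sel s (q+1)) 0 := by
        show blk (sel s ((i+1) / (L:ℤ))) (((i+1) % (L:ℤ)).toNat) = _
        rw [hmod1, hdiv1]
        simp
      have hcur : π s i = blk (sel s q) (L-1) := by
        show blk (sel s (i / (L:ℤ))) ((i % (L:ℤ)).toNat) = _
        rw [← hq, ← hr, htn]
      rw [hcur, hgoal]
      exact le_trans (hblkbound _ _) hκβ
  have hπnat : ∀ s (m : ℕ), π s (m : ℤ) = blk (s (m / L)) (m % L) := by
    intro s m
    show blk (sel s ((m:ℤ) / (L:ℤ))) (((m:ℤ) % (L:ℤ)).toNat) = blk (s (m / L)) (m % L)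
    have h1 : ((m:ℤ)) / (L:ℤ) = ((m / L : ℕ) : ℤ) := rfl
    have h2 : ((m:ℤ)) % (L:ℤ) = ((m % L : ℕ) : ℤ) := rfl
    rw [h1, h2, Int.toNat_natCast]
    congr 1
  have hπval : ∀ s (j : ℕ), π s ((j * L + N : ℕ) : ℤ) = (if s j then ζ N else ξ N) := by
    intro s j
    rw [hπnat]
    have hdiv : (j * L + N) / L = j := by
      rw [Nat.add_comm, Nat.mul_comm j L, Nat.add_mul_div_left _ _ hLpos,
        Nat.div_eq_of_lt hNL, Nat.zero_add]
    have hmod : (j * L + N) % L = N := by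
      rw [Nat.add_comm, Nat.add_mul_mod_self_right, Nat.mod_eq_of_lt hNL]

    rw [hdiv, hmod]
    by_cases h : s j = true
    · rw [h, if_pos rfl]
      show B (N % b) = ζ N
      rw [Nat.mod_eq_of_lt hNb, hBN]
    · have h' : s j = false := by simpa using h
      rw [h', if_neg (by simp)]
      show A (N % a) = ξ N
      rw [Nat.mod_eq_of_lt hNa, hAN]
  -- shadows
  refine ⟨L, hLpos, ?_⟩
  intro k n hkn
  set ext : (Fin k → Bool) → (ℕ → Bool) := fun σ j => if h : j < k then σ ⟨j, h⟩ else false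
    with hextdef
  have hshadow : ∀ σ : Fin k → Bool, ∃ y : X, ∀ i : ℤ,
      dist (iterZ f i y) (π (ext σ) i) ≤ e/8 := by
    intro σ
    obtain ⟨y, hy⟩ := hshad (π (ext σ)) (hπmem _) (hπjump _)
    exact ⟨y, hy⟩
  choose Y hY using hshadow
  have hYsep : ∀ σ σ' : Fin k → Bool, σ ≠ σ' → ∃ m : ℕ, m ≤ n ∧
      e/4 ≤ dist ((⇑f)^[m] (Y σ)) ((⇑f)^[m] (Y σ')) := by
    intro σ σ' hne
    have : ∃ j : Fin k, σ j ≠ σ' j := by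
      by_contra hcon
      push_neg at hcon
      exact hne (funext hcon)
    obtain ⟨j, hj⟩ := this
    set m := (j:ℕ) * L + N with hm
    have hmn : m ≤ n := by
      have h1 : (j:ℕ) * L + N < k * L := by
        have : (j:ℕ) + 1 ≤ k := j.2
        calc (j:ℕ) * L + N < (j:ℕ) * L + L := by omega
          _ = ((j:ℕ) + 1) * L := by ring
          _ ≤ k * L := Nat.mul_le_mul_right L this
      omega
    refine ⟨m, hmn, ?_⟩
    have hv : dist (π (ext σ) (m:ℤ)) (π (ext σ') (m:ℤ)) = dist (ξ N) (ζ N) := by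
      rw [hπval, hπval]
      have hj1 : ext σ (j:ℕ) = σ j := by
        simp [hextdef, j.2]
      have hj2 : ext σ' (j:ℕ) = σ' j := by
        simp [hextdef, j.2]
      rw [hj1, hj2]
      cases hσ : σ j <;> cases hσ' : σ' j
      · exact absurd (hσ.trans hσ'.symm) hj
      · simp [dist_comm]
      · simp [dist_comm]
      · exact absurd (hσ.trans hσ'.symm) hj
    have h1 := hY σ (m:ℤ)
    have h2 := hY σ' (m:ℤ)
    rw [iterZ_natCast] at h1 h2
    have h3 : e/2 < dist (π (ext σ) (m:ℤ)) (π (ext σ') (m:ℤ)) := by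
      rw [hv]; exact hsep
    have h4 : dist (π (ext σ) (m:ℤ)) (π (ext σ') (m:ℤ))
        ≤ dist ((⇑f)^[m] (Y σ)) ((⇑f)^[m] (Y σ')) + e/8 + e/8 := by
      have t4 := dist_triangle4 (π (ext σ) (m:ℤ)) ((⇑f)^[m] (Y σ)) ((⇑f)^[m] (Y σ'))
        (π (ext σ') (m:ℤ))
      have h1' : dist (π (ext σ) (m:ℤ)) ((⇑f)^[m] (Y σ)) ≤ e/8 := by
        rw [dist_comm]; exact h1
      have h2' : dist ((⇑f)^[m] (Y σ')) (π (ext σ') (m:ℤ)) ≤ e/8 := h2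
      linarith
    linarith
  -- conclude the counting bound
  apply le_csInf (coverSet_nonempty f.continuous n (by positivity : (0:ℝ) < e/16))
  intro K hK
  obtain ⟨S, hScard, hSc⟩ := hK
  have hctr : ∀ σ : Fin k → Bool, ∃ y ∈ S, ∀ i ≤ n,
      dist ((⇑f)^[i] y) ((⇑f)^[i] (Y σ)) < e/16 := fun σ => hSc (Y σ)
  choose ctr hctrS hctrd using hctr
  have hinj : Function.Injective ctr := by
    intro σ σ' hcc
    by_contra hne
    obtain ⟨m, hmn, hsepm⟩ := hYsep σ σ' hne
    have h1 := hctrd σ m hmn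
    have h2 := hctrd σ' m hmn
    rw [hcc] at h1
    have : dist ((⇑f)^[m] (Y σ)) ((⇑f)^[m] (Y σ')) < e/8 := by
      calc dist ((⇑f)^[m] (Y σ)) ((⇑f)^[m] (Y σ'))
          ≤ dist ((⇑f)^[m] (Y σ)) ((⇑f)^[m] (ctr σ'))
            + dist ((⇑f)^[m] (ctr σ')) ((⇑f)^[m] (Y σ')) := dist_triangle _ _ _
        _ < e/16 + e/16 := by
            rw [dist_comm ((⇑f)^[m] (Y σ))]
            exact add_lt_add h1 h2
        _ = e/8 := by ring
    linarith
  calc (2:ℕ)^k = Fintype.card (Fin k → Bool) := by simp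
    _ = (Finset.univ : Finset (Fin k → Bool)).card := (Finset.card_univ).symm
    _ ≤ S.card := Finset.card_le_card_of_injOn ctr (fun σ _ => hctrS σ)
        (Function.Injective.injOn hinj)
    _ = K := hScard

end Horn2

section Entropy

theorem topEntropy_pos_of_coverNum {X : Type*} [MetricSpace X]
    (f : X → X) {ε₀ : ℝ} (hε₀ : 0 < ε₀) {L : ℕ} (hL : 0 < L)
    (h : ∀ k n : ℕ, k * L ≤ n → 2^k ≤ coverNum f n ε₀) :
    0 < topEntropy f := by
  set c := Real.log 2 / (2 * L) with hc
  have hlog2 : (0:ℝ) < Real.log 2 := Real.log_pos (by norm_num)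
  have hLR : (0:ℝ) < (L:ℝ) := by exact_mod_cast hL
  have hcpos : 0 < c := by
    rw [hc]
    positivity
  have hev : ∀ᶠ n : ℕ in atTop,
      ENNReal.ofReal c ≤ ENNReal.ofReal (Real.log (coverNum f n ε₀) / n) := by
    rw [eventually_atTop]
    refine ⟨2*L, fun n hn => ?_⟩
    have hnpos : 0 < n := by omega
    have hnR : (0:ℝ) < (n:ℝ) := by exact_mod_cast hnpos
    set k := n / L with hk
    have hkL : k * L ≤ n := Nat.div_mul_le_self n L
    have hcov := h k n hkL
    have h2k : ((2:ℝ))^k ≤ ((coverNum f n ε₀ : ℕ) : ℝ) := by exact_mod_cast hcov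
    have hlogk : (k:ℝ) * Real.log 2 ≤ Real.log (coverNum f n ε₀) := by
      calc (k:ℝ) * Real.log 2 = Real.log ((2:ℝ)^k) := (Real.log_pow 2 k).symm
        _ ≤ Real.log (coverNum f n ε₀) := Real.log_le_log (by positivity) h2k
    have hk1 : 1 ≤ k := by
      rw [hk]
      exact (Nat.one_le_div_iff hL).mpr (by omega)
    have hk1R : (1:ℝ) ≤ (k:ℝ) := by exact_mod_cast hk1
    have hdm : (L:ℝ) * (k:ℝ) + ((n % L : ℕ) : ℝ) = (n:ℝ) := by
      exact_mod_cast congrArg (Nat.cast : ℕ → ℝ) (Nat.div_add_mod n L)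
    have hmodR : ((n % L : ℕ) : ℝ) < (L:ℝ) := by
      exact_mod_cast Nat.mod_lt n hL
    have hn2Lk : (n:ℝ) ≤ 2 * L * k := by nlinarith
    have hgoal : c ≤ Real.log (coverNum f n ε₀) / n := by
      rw [hc, div_le_div_iff₀ (by positivity) hnR]
      calc Real.log 2 * n ≤ Real.log 2 * (2*L*k) := by nlinarith
        _ = ((k:ℝ) * Real.log 2) * (2*L) := by ring
        _ ≤ Real.log (coverNum f n ε₀) * (2*L) := by nlinarith
    exact ENNReal.ofReal_le_ofReal hgoal
  have hle : ENNReal.ofReal c ≤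
      Filter.atTop.limsup (fun n : ℕ => ENNReal.ofReal (Real.log (coverNum f n ε₀) / n)) := by
    calc ENNReal.ofReal c
        = Filter.limsup (fun _ : ℕ => ENNReal.ofReal c) atTop := (Filter.limsup_const _).symm
      _ ≤ _ := Filter.limsup_le_limsup hev
  have hsup : Filter.atTop.limsup (fun n : ℕ => ENNReal.ofReal (Real.log (coverNum f n ε₀) / n))
      ≤ topEntropy f :=
    le_iSup₂ (f := fun (ε : ℝ) (_ : 0 < ε) =>
      Filter.atTop.limsup fun n : ℕ => ENNReal.ofReal (Real.log (coverNum f n ε) / n)) ε₀ hε₀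
  exact lt_of_lt_of_le (ENNReal.ofReal_pos.mpr hcpos) (le_trans hle hsup)

end Entropy

/-- If `f` is a homeomorphism of a compact metric space whose restriction to the
nonwandering set has the POTP and `f` admits a positively expansive Borel
probability measure, then `f` has positive topological entropy. -/
theorem entropy_pos_of_potp_nonwandering_of_positivelyExpansive
    {X : Type*} [MetricSpace X] [CompactSpace X] [MeasurableSpace X] [BorelSpace X]
    (f : X ≃ₜ X) (hPOTP : POTPOn f (nonWanderingSet f))
    (μ : Measure X) [IsProbabilityMeasure μ]
    (hμ : IsPositivelyExpansive (⇑f) μ) :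
    0 < topEntropy (⇑f) := by
  classical
  obtain ⟨e, he, hμe⟩ := hμ
  haveI : Nonempty X := by
    by_contra hne
    rw [not_nonempty_iff] at hne
    have h1 : μ univ = 1 := measure_univ
    have h2 : (univ : Set X) = ∅ := by
      ext x
      exact absurd (Nonempty.intro x) (by exact fun h => (hne.elim (Classical.choice h)))
    rw [h2, measure_empty] at h1
    exact zero_ne_one h1
  obtain ⟨δP, hδP, hshad⟩ := hPOTP (e/8) (by positivity)
  set δ₀ := min δP (e/8) with hδ₀def
  have hδ₀ : 0 < δ₀ := lt_min hδP (by positivity)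
  have hδ₀P : δ₀ ≤ δP := min_le_left _ _
  have hδ₀e : δ₀ ≤ e/8 := min_le_right _ _
  set κ := δ₀/2 with hκdef
  set δ' := δ₀/8 with hδ'def
  set β := δ₀/8 with hβdef
  have hδ'κ : δ' ≤ κ := by rw [hκdef, hδ'def]; linarith
  obtain ⟨γ1, hγ1, hmod1⟩ := modulus f.continuous (show (0:ℝ) < 3*δ₀/8 by positivity)
  set γn := γ1/2 with hγndef
  have hγn : 0 < γn := by rw [hγndef]; positivity
  have hmodnet : ∀ x y : X, dist x y ≤ 2*γn → dist (f x) (f y) + δ' ≤ κ := by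
    intro x y hxy
    have h1 := hmod1 x y (by rw [hγndef] at hxy; linarith)
    rw [hκdef, hδ'def]
    linarith
  obtain ⟨γ2, hγ2, hmod2⟩ := modulus f.continuous (show (0:ℝ) < δ'/2 by rw [hδ'def]; positivity)
  set τ := min γ2 (min (δ'/2) (β/8)) with hτdef
  have hδ'pos : 0 < δ' := by rw [hδ'def]; positivity
  have hβpos : 0 < β := by rw [hβdef]; positivity
  have hτ : 0 < τ := by
    rw [hτdef]
    apply lt_min hγ2
    apply lt_min
    · positivity
    · positivity
  have hτγ2 : τ ≤ γ2 := min_le_left _ _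
  have hτδ' : τ ≤ δ'/2 := le_trans (min_le_right _ _) (min_le_left _ _)
  have hτβ : τ ≤ β/8 := le_trans (min_le_right _ _) (min_le_right _ _)
  have hτj : ∀ x y : X, dist x y ≤ τ → dist (f x) (f y) + τ ≤ δ' := by
    intro x y hxy
    have h1 := hmod2 x y (le_trans hxy hτγ2)
    linarith
  by_cases hQ : BranchPair (⇑f) (nonWanderingSet (⇑f)) δ' κ β (e/2)
  · -- branching: build entropy via the shadowing property
    have hshad' : ∀ x : ℤ → X, (∀ i : ℤ, x i ∈ nonWanderingSet (⇑f)) →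
        (∀ i : ℤ, dist (f (x i)) (x (i + 1)) ≤ δP) →
        ∃ y, ∀ i : ℤ, dist (iterZ f i y) (x i) ≤ e/8 := by
      intro x h1 h2
      obtain ⟨y, -, hy⟩ := hshad x h1 h2
      exact ⟨y, hy⟩
    have hκβP : κ + β ≤ δP := by
      rw [hκdef, hβdef]
      linarith
    obtain ⟨L, hLpos, hcov⟩ := coverNum_lower_of_branch f he hshad' hδ'κ hκβP hQ
    exact topEntropy_pos_of_coverNum (⇑f) (by positivity : (0:ℝ) < e/16) hLpos hcov
  · -- no branching: contradict positive expansiveness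
    have hstart : 2*τ + β/4 ≤ β := by linarith
    have hβe : β/4 ≤ e := by
      rw [hβdef]
      linarith
    have hfin : 2*τ + e/2 ≤ e := by
      have : τ ≤ e := by
        have : β ≤ e := by rw [hβdef]; linarith
        linarith
      have hτe : τ ≤ e/8 := by
        have hβ8 : β/8 ≤ e/8 := by rw [hβdef]; linarith
        linarith
      linarith
    obtain ⟨x, hx⟩ := exists_phi_pos_of_no_branch f μ he hβpos hτ hγn hδ'κ hmodnet hτj
      hstart hβe hfin hQ
    rw [hμe x] at hx
    exact absurd hx (lt_irrefl 0)
end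

section
/- Let f : X → X be a homeomorphism of a metric space X. If μ is a positively expansive Borel probability measure for f with expansivity constant δ, then the pushforward measure (f⁻¹)_*μ = μ ∘ f is also a positively expansive measure for f with expansivity constant δ. -/
open MeasureTheory Set

/-- `μ` is positively expansive for `f` with expansivity constant `δ > 0`:
`μ (Φ_δ x) = 0` for every `x`. -/
def IsPositivelyExpansiveWith {X : Type*} [MetricSpace X] [MeasurableSpace X]
    (f : X → X) (μ : Measure X) (δ : ℝ) : Prop :=
  0 < δ ∧ ∀ x : X, μ (phiSet f δ x) = 0

/-- If `μ` is a positively expansive measure for the homeomorphism `f` with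
expansivity constant `δ`, then so is the pushforward `(f⁻¹)_* μ = μ ∘ f`. -/
theorem isPositivelyExpansiveWith_map_symm
    {X : Type*} [MetricSpace X] [MeasurableSpace X] [BorelSpace X]
    (f : X ≃ₜ X) (μ : Measure X) [IsProbabilityMeasure μ] {δ : ℝ}
    (hμ : IsPositivelyExpansiveWith (⇑f) μ δ) :
    IsPositivelyExpansiveWith (⇑f) (Measure.map (⇑f.symm) μ) δ := by
  obtain ⟨hδ, h⟩ := hμ
  refine ⟨hδ, fun x => ?_⟩
  have hmeas : Measurable (⇑f.symm) := f.symm.continuous.measurable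
  rw [MeasureTheory.Measure.map_apply hmeas]
  · refine measure_mono_null ?_ (h (f x))
    intro y hy i
    have := hy (i + 1)
    simpa [Function.iterate_succ_apply, Function.iterate_succ_apply'] using this
  · -- measurability of phiSet
    have : phiSet (⇑f) δ x = ⋂ i : ℕ, {y | dist (f^[i] x) (f^[i] y) ≤ δ} := by
      ext y; simp [phiSet]
    rw [this]
    refine MeasurableSet.iInter fun i => ?_
    have hc : Continuous fun y => dist (f^[i] x) ((⇑f)^[i] y) :=
      Continuous.dist continuous_const ((f.continuous.iterate i))
    exact measurableSet_le hc.measurable measurable_const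
end

section
/- Let f : X → X be a homeomorphism of a metric space X and μ a positively expansive Borel probability measure for f with expansivity constant δ. Then for every n ≥ 1 the Cesàro average μ_n = (1/n) ∑_{i=0}^{n-1} (f^{-i})_*μ is a positively expansive Borel probability measure for f with the same expansivity constant δ. -/
open MeasureTheory Set Finset ENNReal

/-- If `μ` is positively expansive for the homeomorphism `f` with expansivity
constant `δ`, then for every `n ≥ 1` the Cesàro average
`μ_n = (1/n) ∑_{i=0}^{n-1} (f^{-i})_* μ` is a positively expansive probability
measure for `f` with the same expansivity constant `δ`. -/
theorem cesaro_average_isPositivelyExpansiveWith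
    {X : Type*} [MetricSpace X] [MeasurableSpace X] [BorelSpace X]
    (f : X ≃ₜ X) (μ : Measure X) [IsProbabilityMeasure μ] {δ : ℝ}
    (hμ : IsPositivelyExpansiveWith (⇑f) μ δ) (n : ℕ) (hn : 1 ≤ n) :
    IsProbabilityMeasure
        ((n : ℝ≥0∞)⁻¹ • ∑ i ∈ Finset.range n, Measure.map ((⇑f.symm)^[i]) μ) ∧
      IsPositivelyExpansiveWith (⇑f)
        ((n : ℝ≥0∞)⁻¹ • ∑ i ∈ Finset.range n, Measure.map ((⇑f.symm)^[i]) μ) δ := by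
  obtain ⟨hδ, hx⟩ := hμ
  have hcl : ∀ x : X, MeasurableSet (phiSet (⇑f) δ x) := by
    intro x
    have hc : IsClosed (phiSet (⇑f) δ x) := by
      have : phiSet (⇑f) δ x = ⋂ i : ℕ, {y | dist (f^[i] x) (f^[i] y) ≤ δ} := by
        ext y; simp [phiSet]
      rw [this]
      exact isClosed_iInter fun i =>
        isClosed_le (Continuous.dist continuous_const
          ((f.continuous.iterate i))) continuous_const
    exact hc.measurableSet
  have hmeas : ∀ i : ℕ, Measurable ((⇑f.symm)^[i]) := fun i =>
    f.symm.continuous.measurable.iterate i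
  have hn0 : (n : ℝ≥0∞) ≠ 0 := Nat.cast_ne_zero.mpr (by omega)
  constructor
  · constructor
    rw [Measure.smul_apply, Measure.coe_finset_sum, Finset.sum_apply]
    have h1 : ∀ i ∈ Finset.range n,
        Measure.map ((⇑f.symm)^[i]) μ Set.univ = 1 := by
      intro i _
      rw [Measure.map_apply (hmeas i) MeasurableSet.univ, Set.preimage_univ,
        measure_univ]
    rw [Finset.sum_congr rfl h1, Finset.sum_const, Finset.card_range,
      nsmul_eq_mul, mul_one, smul_eq_mul, ENNReal.inv_mul_cancel hn0 (by simp)]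
  · refine ⟨hδ, fun x => ?_⟩
    rw [Measure.smul_apply, Measure.coe_finset_sum, Finset.sum_apply]
    have h0 : ∀ i ∈ Finset.range n,
        Measure.map ((⇑f.symm)^[i]) μ (phiSet (⇑f) δ x) = 0 := by
      intro i _
      rw [Measure.map_apply (hmeas i) (hcl x)]
      refine measure_mono_null ?_ (hx (f^[i] x))
      intro y hy j
      have hli : Function.LeftInverse ((⇑f)^[i]) ((⇑f.symm)^[i]) :=
        Function.LeftInverse.iterate f.apply_symm_apply i
      have e1 : (⇑f)^[j] ((⇑f)^[i] x) = (⇑f)^[j + i] x :=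
        (Function.iterate_add_apply _ j i x).symm
      have e2 : (⇑f)^[j] y = (⇑f)^[j + i] ((⇑f.symm)^[i] y) := by
        rw [Function.iterate_add_apply, hli y]
      rw [e1, e2]
      exact hy (j + i)
    rw [Finset.sum_congr rfl h0, Finset.sum_const, smul_zero, smul_eq_mul,
      mul_zero]
end

section
/- Let f : X → X be a homeomorphism of a compact metric space X with the pseudo-orbit tracing property. If the topological entropy of f is zero, then the restriction of f to its nonwandering set Ω(f) is equicontinuous. -/
open MeasureTheory Filter Set ENNReal

/-- The homeomorphism `f` has the pseudo-orbit tracing property: for all `ε > 0`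
there is `δ > 0` such that every `δ`-pseudo-orbit is `ε`-shadowed. -/
def POTP {X : Type*} [MetricSpace X] (f : X ≃ₜ X) : Prop :=
  ∀ ε > (0 : ℝ), ∃ δ > (0 : ℝ), ∀ x : ℤ → X,
    (∀ i : ℤ, dist (f (x i)) (x (i + 1)) ≤ δ) →
    ∃ y : X, ∀ i : ℤ, dist (iterZ f i y) (x i) ≤ ε

/-- The restriction of `f` to the invariant set `S` is equicontinuous: for every
`ε > 0` there is `δ > 0` such that any two `δ`-close points of `S` stay
`ε`-close under all forward iterates. -/
def EquicontinuousOnSet {X : Type*} [MetricSpace X] (f : X → X) (S : Set X) : Prop :=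
  ∀ ε > (0 : ℝ), ∃ δ > (0 : ℝ), ∀ x ∈ S, ∀ y ∈ S, dist x y < δ →
    ∀ i : ℕ, dist (f^[i] x) (f^[i] y) < ε

set_option linter.unusedSectionVars false

section Aux

variable {X : Type*} [MetricSpace X]

private lemma unif_mod [CompactSpace X] {g : X → X} (hg : Continuous g) {η : ℝ} (hη : 0 < η) :
    ∃ γ > (0:ℝ), ∀ a b : X, dist a b < γ → dist (g a) (g b) < η := by
  have h := CompactSpace.uniformContinuous_of_continuous hg
  rw [Metric.uniformContinuous_iff] at h
  obtain ⟨γ, hγ, hh⟩ := h η hη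
  exact ⟨γ, hγ, fun a b hab => hh hab⟩

private lemma nw_apply {f : X ≃ₜ X} {p : X} (hp : p ∈ nonWanderingSet (⇑f)) :
    f p ∈ nonWanderingSet (⇑f) := by
  intro U hU
  obtain ⟨k, hk, w, hw⟩ := hp ((⇑f) ⁻¹' U) (f.continuous.continuousAt.preimage_mem_nhds hU)
  obtain ⟨⟨v, hv, hvw⟩, hw2⟩ := hw
  refine ⟨k, hk, ⟨f w, ⟨f v, hv, ?_⟩, hw2⟩⟩
  rw [← Function.iterate_succ_apply, Function.iterate_succ_apply', hvw]

private lemma nw_iterate {f : X ≃ₜ X} {p : X} (hp : p ∈ nonWanderingSet (⇑f)) :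
    ∀ n : ℕ, (⇑f)^[n] p ∈ nonWanderingSet (⇑f) := by
  intro n
  induction n with
  | zero => exact hp
  | succ n ih => rw [Function.iterate_succ_apply']; exact nw_apply ih

private lemma chain_concat {f : X → X} {η : ℝ} {ℓ₁ ℓ₂ : ℕ} {c d : ℕ → X} (h1 : 1 ≤ ℓ₁)
    (hc : ∀ j < ℓ₁, dist (f (c j)) (c (j+1)) ≤ η) (hd : ∀ j < ℓ₂, dist (f (d j)) (d (j+1)) ≤ η)
    (hcd : c ℓ₁ = d 0) :
    ∃ e : ℕ → X, e 0 = c 0 ∧ e (ℓ₁ + ℓ₂) = d ℓ₂ ∧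
      ∀ j < ℓ₁ + ℓ₂, dist (f (e j)) (e (j+1)) ≤ η := by
  refine ⟨fun j => if j < ℓ₁ then c j else d (j - ℓ₁), by simp [show (0:ℕ) < ℓ₁ from h1], by
    simp only [if_neg (by omega : ¬ (ℓ₁ + ℓ₂ < ℓ₁))]
    rw [show ℓ₁ + ℓ₂ - ℓ₁ = ℓ₂ by omega], ?_⟩
  intro j hj
  by_cases hj1 : j + 1 < ℓ₁
  · simp only [if_pos (by omega : j < ℓ₁), if_pos hj1]
    exact hc j (by omega)
  · by_cases hj2 : j < ℓ₁
    · have hje : j + 1 = ℓ₁ := by omega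
      simp only [if_pos hj2, if_neg (by omega : ¬ (j + 1 < ℓ₁))]
      rw [show j + 1 - ℓ₁ = 0 by omega, ← hcd, ← hje]
      exact hc j (by omega)
    · simp only [if_neg hj2, if_neg (by omega : ¬ (j + 1 < ℓ₁))]
      rw [show j + 1 - ℓ₁ = (j - ℓ₁) + 1 by omega]
      exact hd (j - ℓ₁) (by omega)

private lemma nw_chain_step [CompactSpace X] (f : X ≃ₜ X) {p : X}
    (hp : p ∈ nonWanderingSet (⇑f)) {η : ℝ} (hη : 0 < η) :
    ∃ ℓ, 1 ≤ ℓ ∧ ∃ c : ℕ → X, c 0 = f p ∧ c ℓ = p ∧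
      ∀ j < ℓ, dist (f (c j)) (c (j + 1)) ≤ η := by
  obtain ⟨γ₁, hγ₁, h1⟩ := unif_mod f.continuous (show (0:ℝ) < η/4 by linarith)
  obtain ⟨γ₂, hγ₂, h2⟩ := unif_mod (f.continuous.comp f.continuous)
    (show (0:ℝ) < η/4 by linarith)
  have hγpos : 0 < min (min γ₁ γ₂) (η/4) := lt_min (lt_min hγ₁ hγ₂) (by linarith)
  set γ := min (min γ₁ γ₂) (η/4) with hγdef
  obtain ⟨k, hk, w, hw⟩ := hp (Metric.ball p γ) (Metric.ball_mem_nhds p hγpos)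
  obtain ⟨⟨u, hu, huw⟩, hw2⟩ := hw
  have hup : dist u p < γ := Metric.mem_ball.mp hu
  have hkup : dist ((⇑f)^[k] u) p < γ := by rw [huw]; exact Metric.mem_ball.mp hw2
  have hγ1 : γ ≤ γ₁ := le_trans (min_le_left _ _) (min_le_left _ _)
  have hγ2 : γ ≤ γ₂ := le_trans (min_le_left _ _) (min_le_right _ _)
  have hγη : γ ≤ η/4 := min_le_right _ _
  have hffpu : dist (f (f p)) (f (f u)) < η/4 := by
    have := h2 p u (by rw [dist_comm]; exact lt_of_lt_of_le hup hγ2)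
    simpa using this
  rcases Nat.lt_or_ge k 2 with hk2 | hk2
  · -- k = 1
    have hk1 : k = 1 := by omega
    subst hk1
    have hfu : dist (f u) p < γ := by simpa using hkup
    refine ⟨1, le_refl 1, fun j => if j = 0 then f p else p, by simp, by simp, ?_⟩
    intro j hj
    have hj0 : j = 0 := by omega
    subst hj0
    simp only [Nat.zero_add, reduceIte]
    rw [if_neg Nat.one_ne_zero]
    have e2 : dist (f (f u)) (f p) < η/4 := h1 (f u) p (lt_of_lt_of_le hfu hγ1)
    have e3 : dist (f p) (f u) < η/4 := h1 p u (by rw [dist_comm]; exact lt_of_lt_of_le hup hγ1)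
    have tri := dist_triangle4 (f (f p)) (f (f u)) (f p) p
    have e5 : dist (f p) p ≤ dist (f p) (f u) + dist (f u) p := dist_triangle _ _ _
    have : γ ≤ η := by linarith
    linarith
  · -- k ≥ 2
    refine ⟨k - 1, by omega, fun j => if j = 0 then f p else if j < k - 1 then (⇑f)^[j+1] u else p,
      by simp, ?_, ?_⟩
    · simp only [if_neg (by omega : ¬ (k-1 = 0)), if_neg (lt_irrefl (k-1))]
    · intro j hj
      rcases Nat.eq_zero_or_pos j with h0 | h0
      · subst h0
        simp only [Nat.zero_add, reduceIte]
        rw [if_neg Nat.one_ne_zero]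
        by_cases h1' : 1 < k - 1
        · rw [if_pos h1']
          have h2u : (⇑f)^[1+1] u = f (f u) := by
            simp [Function.iterate_succ_apply']
          rw [h2u]
          linarith
        · rw [if_neg h1']
          have hk2' : k = 2 := by omega
          have hfu2 : dist (f (f u)) p < γ := by
            have := hkup
            rw [hk2'] at this
            simpa [Function.iterate_succ_apply'] using this
          have tri : dist (f (f p)) p ≤ dist (f (f p)) (f (f u)) + dist (f (f u)) p :=
            dist_triangle _ _ _
          linarith
      · have hjlt : j < k - 1 := hj
        simp only [if_neg (by omega : ¬ j = 0), if_pos hjlt, if_neg (by omega : ¬ (j + 1 = 0))]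
        by_cases h4 : j + 1 < k - 1
        · rw [if_pos h4, Function.iterate_succ_apply' (⇑f) (j+1) u]
          simp [hη.le]
        · rw [if_neg h4]
          have hfk : f ((⇑f)^[j+1] u) = (⇑f)^[k] u := by
            rw [← Function.iterate_succ_apply' (⇑f) (j+1) u]
            congr 1
            omega
          rw [hfk]
          have : γ ≤ η := by linarith
          linarith

private lemma nw_chain_to_self [CompactSpace X] (f : X ≃ₜ X) {p : X}
    (hp : p ∈ nonWanderingSet (⇑f)) {η : ℝ} (hη : 0 < η) (n : ℕ) :
    ∃ ℓ, 1 ≤ ℓ ∧ ∃ c : ℕ → X, c 0 = (⇑f)^[n] p ∧ c ℓ = p ∧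
      ∀ j < ℓ, dist (f (c j)) (c (j + 1)) ≤ η := by
  induction n with
  | zero =>
    obtain ⟨ℓ, hℓ, c, hc0, hcend, hc⟩ := nw_chain_step f hp hη
    refine ⟨ℓ + 1, by omega, fun j => if j = 0 then p else c (j - 1), by simp, by
      show (if ℓ + 1 = 0 then p else c (ℓ + 1 - 1)) = p
      rw [if_neg (by omega : ¬ (ℓ + 1 = 0)), show ℓ + 1 - 1 = ℓ by omega]; exact hcend, ?_⟩
    intro j hj
    rcases Nat.eq_zero_or_pos j with h0 | h0
    · subst h0
      simp only [Nat.zero_add, reduceIte]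
      rw [show (1:ℕ) - 1 = 0 from rfl, hc0]
      simp [hη.le]
    · simp only [if_neg (by omega : ¬ j = 0), if_neg (by omega : ¬ (j + 1 = 0))]
      rw [show j + 1 - 1 = (j - 1) + 1 by omega]
      exact hc (j - 1) (by omega)
  | succ n ih =>
    obtain ⟨ℓ₁, hℓ₁, c, hc0, hcend, hc⟩ := nw_chain_step f (nw_iterate hp n) hη
    obtain ⟨ℓ₂, hℓ₂, d, hd0, hdend, hd⟩ := ih
    obtain ⟨e, he0, heend, he⟩ := chain_concat hℓ₁ hc hd (hcend.trans hd0.symm)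
    exact ⟨ℓ₁ + ℓ₂, by omega, e,
      by rw [he0, hc0]; exact (Function.iterate_succ_apply' (⇑f) n p).symm,
      by rw [heend, hdend], he⟩

end Aux

section Aux2

variable {X : Type*} [MetricSpace X]

private def loopA (f : X → X) (x : X) (n : ℕ) (c : ℕ → X) : ℕ → X :=
  fun j => if j ≤ n then f^[j] x else c (j - n)

private lemma loopA_zero {f : X → X} {x : X} {n : ℕ} {c : ℕ → X} :
    loopA f x n c 0 = x := by simp [loopA]

private lemma loopA_n {f : X → X} {x : X} {n : ℕ} {c : ℕ → X} :
    loopA f x n c n = f^[n] x := by simp [loopA]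

private lemma loopA_end {f : X → X} {x : X} {n : ℕ} {c : ℕ → X} {ℓ : ℕ}
    (hℓ : 1 ≤ ℓ) (hend : c ℓ = x) : loopA f x n c (n + ℓ) = x := by
  unfold loopA
  rw [if_neg (by omega : ¬ (n + ℓ ≤ n)), show n + ℓ - n = ℓ by omega, hend]

private lemma loopA_chain {f : X → X} {x : X} {n : ℕ} {c : ℕ → X} {δ : ℝ}
    (hδ : 0 ≤ δ) {ℓ : ℕ} (hℓ : 1 ≤ ℓ) (hc0 : c 0 = f^[n] x)
    (hc : ∀ j < ℓ, dist (f (c j)) (c (j + 1)) ≤ δ) :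
    ∀ j < n + ℓ, dist (f (loopA f x n c j)) (loopA f x n c (j + 1)) ≤ δ := by
  intro j hj
  unfold loopA
  by_cases h1 : j + 1 ≤ n
  · rw [if_pos (by omega : j ≤ n), if_pos h1,
      show f (f^[j] x) = f^[j+1] x from (Function.iterate_succ_apply' f j x).symm]
    simp [hδ]
  · by_cases h2 : j ≤ n
    · have hjn : j = n := by omega
      subst hjn
      rw [if_pos (le_refl j), if_neg h1, show j + 1 - j = 1 by omega, ← hc0]
      exact hc 0 (by omega)
    · rw [if_neg h2, if_neg h1, show j + 1 - n = (j - n) + 1 by omega]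
      exact hc (j - n) (by omega)

private def loopB (f : X → X) (x y : X) (n m : ℕ) (c : ℕ → X) : ℕ → X :=
  fun j => if j = 0 then x else if j ≤ n then f^[j] y else if j < m then c (j - n) else x

private lemma loopB_zero {f : X → X} {x y : X} {n m : ℕ} {c : ℕ → X} :
    loopB f x y n m c 0 = x := by simp [loopB]

private lemma loopB_n {f : X → X} {x y : X} {n m : ℕ} {c : ℕ → X} (hn : 1 ≤ n) :
    loopB f x y n m c n = f^[n] y := by
  unfold loopB
  rw [if_neg (by omega : ¬ (n = 0)), if_pos (le_refl n)]

private lemma loopB_end {f : X → X} {x y : X} {n m : ℕ} {c : ℕ → X} (hm : n < m) :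
    loopB f x y n m c m = x := by
  unfold loopB
  rw [if_neg (by omega : ¬ (m = 0)), if_neg (by omega : ¬ (m ≤ n)), if_neg (lt_irrefl m)]

private lemma loopB_chain {f : X → X} {x y : X} {n : ℕ} {c : ℕ → X} {δ : ℝ}
    (hδ : 0 < δ) (hn1 : 1 ≤ n) {ℓ : ℕ} (hℓ : 1 ≤ ℓ) (hc0 : c 0 = f^[n] y) (hcend : c ℓ = y)
    (hc : ∀ j < ℓ, dist (f (c j)) (c (j + 1)) ≤ δ/2)
    (hfxy : dist (f x) (f y) ≤ δ) (hyx : dist y x ≤ δ/2) :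
    ∀ j < n + ℓ, dist (f (loopB f x y n (n + ℓ) c j)) (loopB f x y n (n + ℓ) c (j + 1)) ≤ δ := by
  intro j hj
  unfold loopB
  rcases Nat.eq_zero_or_pos j with h0 | h0
  · subst h0
    rw [if_pos rfl, if_neg Nat.one_ne_zero, if_pos hn1, Function.iterate_one]
    exact hfxy
  · by_cases h2 : j + 1 ≤ n
    · rw [if_neg (by omega : ¬ (j = 0)), if_pos (by omega : j ≤ n),
        if_neg (by omega : ¬ (j + 1 = 0)), if_pos h2,
        show f (f^[j] y) = f^[j+1] y from (Function.iterate_succ_apply' f j y).symm]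
      simp [hδ.le]
    · by_cases h3 : j ≤ n
      · have hjn : j = n := by omega
        subst hjn
        rw [if_neg (by omega : ¬ (j = 0)), if_pos (le_refl j), if_neg (by omega : ¬ (j + 1 = 0)),
          if_neg h2]
        by_cases h4 : j + 1 < j + ℓ
        · rw [if_pos h4, show j + 1 - j = 1 by omega, ← hc0]
          exact le_trans (hc 0 (by omega)) (by linarith)
        · have hℓ1 : ℓ = 1 := by omega
          rw [if_neg h4, ← hc0]
          have h5 := hc 0 (by omega)
          rw [show (0:ℕ) + 1 = ℓ by omega, hcend] at h5
          calc dist (f (c 0)) x ≤ dist (f (c 0)) y + dist y x := dist_triangle _ _ _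
            _ ≤ δ/2 + δ/2 := add_le_add h5 hyx
            _ = δ := by ring
      · rw [if_neg (by omega : ¬ (j = 0)), if_neg h3, if_pos hj,
          if_neg (by omega : ¬ (j + 1 = 0)), if_neg (by omega : ¬ (j + 1 ≤ n))]
        by_cases h4 : j + 1 < n + ℓ
        · rw [if_pos h4, show j + 1 - n = (j - n) + 1 by omega]
          exact le_trans (hc (j - n) (by omega)) (by linarith)
        · rw [if_neg h4]
          have h5 := hc (j - n) (by omega)
          rw [show j - n + 1 = ℓ by omega, hcend] at h5
          calc dist (f (c (j - n))) x ≤ dist (f (c (j - n))) y + dist y x := dist_triangle _ _ _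
            _ ≤ δ/2 + δ/2 := add_le_add h5 hyx
            _ = δ := by ring

private lemma loop_repeat {f : X → X} {η : ℝ} {x : X} {L : ℕ} {c : ℕ → X} (hL : 0 < L)
    (h0 : c 0 = x) (hend : c L = x) (hc : ∀ j < L, dist (f (c j)) (c (j + 1)) ≤ η) (j : ℕ) :
    dist (f (c (j % L))) (c ((j + 1) % L)) ≤ η := by
  have hr : j % L < L := Nat.mod_lt _ hL
  rcases eq_or_lt_of_le (show 1 ≤ L from hL) with h1 | h1
  · obtain rfl : L = 1 := h1.symm
    simp only [Nat.mod_one]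
    have h := hc 0 hL
    rw [show (0:ℕ) + 1 = 1 from rfl, hend, ← h0] at h
    exact h
  · have hmod : (j + 1) % L = (j % L + 1) % L := by
      rw [Nat.add_mod, Nat.mod_eq_of_lt h1]
    by_cases h : j % L + 1 < L
    · rw [hmod, Nat.mod_eq_of_lt h]
      exact hc _ hr
    · have hEq : j % L + 1 = L := by omega
      rw [hmod, hEq, Nat.mod_self]
      have h2 := hc _ hr
      rw [hEq, hend] at h2
      rw [h0]
      exact h2

private lemma word_chain {f : X → X} {η : ℝ} {x : X} {N : ℕ} (hN : 0 < N) (D : Bool → ℕ → X)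
    (hD0 : ∀ b, D b 0 = x) (hDN : ∀ b, D b N = x)
    (hDchain : ∀ b j, dist (f (D b j)) (D b (j + 1)) ≤ η) (ω : ℕ → Bool) (j : ℕ) :
    dist (f (D (ω (j / N)) (j % N))) (D (ω ((j + 1) / N)) ((j + 1) % N)) ≤ η := by
  obtain ⟨t, r, hj, hr⟩ : ∃ t r, j = N * t + r ∧ r < N :=
    ⟨j / N, j % N, by rw [Nat.div_add_mod], Nat.mod_lt _ hN⟩
  subst hj
  have ht : (N * t + r) / N = t := by rw [Nat.mul_add_div hN, Nat.div_eq_of_lt hr, add_zero]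
  have hm : (N * t + r) % N = r := by rw [Nat.mul_add_mod, Nat.mod_eq_of_lt hr]
  by_cases h : r + 1 < N
  · have ht1 : (N * t + r + 1) / N = t := by
      rw [show N * t + r + 1 = N * t + (r + 1) by ring, Nat.mul_add_div hN,
        Nat.div_eq_of_lt h, add_zero]
    have hm1 : (N * t + r + 1) % N = r + 1 := by
      rw [show N * t + r + 1 = N * t + (r + 1) by ring, Nat.mul_add_mod, Nat.mod_eq_of_lt h]
    rw [ht, hm, ht1, hm1]
    exact hDchain _ _
  · have hrN : r + 1 = N := by omega
    have hNt : N * t + r + 1 = N * (t + 1) := by rw [add_assoc, hrN]; ring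
    have ht1 : (N * t + r + 1) / N = t + 1 := by
      rw [hNt, Nat.mul_div_cancel_left _ hN]
    have hm1 : (N * t + r + 1) % N = 0 := by rw [hNt, Nat.mul_mod_right]
    rw [ht, hm, ht1, hm1, hD0]
    have h2 := hDchain (ω t) r
    rw [hrN, hDN] at h2
    exact h2

private lemma spanning_nonempty [CompactSpace X] {f : X → X} (hf : Continuous f) (n : ℕ)
    {ε : ℝ} (hε : 0 < ε) :
    ∃ S : Finset X, ∀ z : X, ∃ y ∈ S, ∀ i ≤ n, dist (f^[i] y) (f^[i] z) < ε := by
  have hopen : ∀ y : X, IsOpen (⋂ i ∈ Finset.range (n + 1), f^[i] ⁻¹' Metric.ball (f^[i] y) ε) :=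
    fun y => isOpen_biInter_finset fun i _ => Metric.isOpen_ball.preimage (hf.iterate i)
  have hcov : (univ : Set X) ⊆ ⋃ y : X, ⋂ i ∈ Finset.range (n + 1),
      f^[i] ⁻¹' Metric.ball (f^[i] y) ε := by
    intro z _
    refine mem_iUnion.mpr ⟨z, ?_⟩
    refine mem_iInter₂.mpr fun i _ => ?_
    simp [Metric.mem_ball, hε]
  obtain ⟨t, ht⟩ := isCompact_univ.elim_finite_subcover _ hopen hcov
  refine ⟨t, fun z => ?_⟩
  obtain ⟨y, hyt, hz⟩ := mem_iUnion₂.mp (ht (mem_univ z))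
  refine ⟨y, hyt, fun i hi => ?_⟩
  have h := mem_iInter₂.mp hz i (Finset.mem_range.mpr (by omega))
  rw [mem_preimage, Metric.mem_ball] at h
  rw [dist_comm]
  exact h

end Aux2

/-- If a homeomorphism of a compact metric space has the POTP and zero
topological entropy, then its restriction to the nonwandering set is
equicontinuous. -/
theorem equicontinuousOn_nonWandering_of_potp_of_entropy_zero
    {X : Type*} [MetricSpace X] [CompactSpace X]
    (f : X ≃ₜ X) (hPOTP : POTP f) (hent : topEntropy (⇑f) = 0) :
    EquicontinuousOnSet (⇑f) (nonWanderingSet (⇑f)) := by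
  by_contra hne
  simp only [EquicontinuousOnSet] at hne
  push_neg at hne
  obtain ⟨ε, hε, H⟩ := hne
  obtain ⟨δ₀, hδ₀, hshad⟩ := hPOTP (ε/8) (by linarith)
  obtain ⟨γf, hγf, hγ⟩ := unif_mod f.continuous hδ₀
  have hδ'pos : (0:ℝ) < min γf (min (δ₀/2) (ε/2)) :=
    lt_min hγf (lt_min (by linarith) (by linarith))
  obtain ⟨x, hx, y, hy, hxy, n, hn⟩ := H _ hδ'pos
  have hxyγ : dist x y < γf := lt_of_lt_of_le hxy (min_le_left _ _)
  have hxyδ : dist x y < δ₀/2 :=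
    lt_of_lt_of_le hxy (le_trans (min_le_right _ _) (min_le_left _ _))
  have hxyε : dist x y < ε/2 :=
    lt_of_lt_of_le hxy (le_trans (min_le_right _ _) (min_le_right _ _))
  have hn1 : 1 ≤ n := by
    by_contra hcon
    have hn0 : n = 0 := by omega
    subst hn0
    simp only [Function.iterate_zero, id_eq] at hn
    linarith
  obtain ⟨ℓA, hℓA, cA, hcA0, hcAend, hcAc⟩ := nw_chain_to_self f hx hδ₀ n
  obtain ⟨ℓB, hℓB, cB, hcB0, hcBend, hcBc⟩ :=
    nw_chain_to_self f hy (show (0:ℝ) < δ₀/2 by linarith) n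
  set NA := n + ℓA with hNAdef
  set NB := n + ℓB with hNBdef
  set N := NA * NB with hNdef
  have hNA0 : 0 < NA := by omega
  have hNB0 : 0 < NB := by omega
  have hN0 : 0 < N := Nat.mul_pos hNA0 hNB0
  have hnNA : n < NA := by omega
  have hnNB : n < NB := by omega
  have hnN : n < N := lt_of_lt_of_le hnNA (Nat.le_mul_of_pos_right _ hNB0)
  have hLAc := loopA_chain (f := ⇑f) (x := x) hδ₀.le hℓA hcA0 hcAc
  have hLBc := loopB_chain (f := ⇑f) (x := x) (y := y) hδ₀ hn1 hℓB hcB0 hcBend hcBc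
    (hγ x y hxyγ).le (by rw [dist_comm]; linarith)
  set D : Bool → ℕ → X :=
    fun b j => cond b (loopB (⇑f) x y n NB cB (j % NB)) (loopA (⇑f) x n cA (j % NA)) with hDdef
  have hD0 : ∀ b, D b 0 = x := by
    intro b
    cases b
    · simp only [hDdef, cond_false, Nat.zero_mod]; exact loopA_zero
    · simp only [hDdef, cond_true, Nat.zero_mod]; exact loopB_zero
  have hDN : ∀ b, D b N = x := by
    intro b
    cases b
    · have hmod : N % NA = 0 := by rw [hNdef]; exact Nat.mul_mod_right NA NB
      simp only [hDdef, cond_false, hmod]; exact loopA_zero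
    · have hmod : N % NB = 0 := by rw [hNdef]; exact Nat.mul_mod_left NA NB
      simp only [hDdef, cond_true, hmod]; exact loopB_zero
  have hDchain : ∀ b j, dist (f (D b j)) (D b (j + 1)) ≤ δ₀ := by
    intro b j
    cases b
    · simp only [hDdef, cond_false]
      exact loop_repeat hNA0 loopA_zero (loopA_end hℓA hcAend) hLAc j
    · simp only [hDdef, cond_true]
      exact loop_repeat hNB0 loopB_zero (loopB_end hnNB) hLBc j
  have hz : ∀ ω : ℕ → Bool, ∃ zz : X,
      ∀ j : ℕ, dist ((⇑f)^[j] zz) (D (ω (j / N)) (j % N)) ≤ ε/8 := by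
    intro ω
    set P : ℤ → X :=
      fun i => if i < 0 then (⇑f.symm)^[(-i).toNat] x else D (ω (i.toNat / N)) (i.toNat % N)
      with hPdef
    have hchain : ∀ i : ℤ, dist (f (P i)) (P (i + 1)) ≤ δ₀ := by
      intro i
      by_cases hi : 0 ≤ i
      · have h3 : (i + 1).toNat = i.toNat + 1 := by omega
        simp only [hPdef, if_neg (by omega : ¬ i < 0), if_neg (by omega : ¬ i + 1 < 0), h3]
        exact word_chain hN0 D hD0 hDN hDchain ω i.toNat
      · push_neg at hi
        by_cases hi1 : i + 1 < 0
        · have hk : (-i).toNat = (-(i + 1)).toNat + 1 := by omega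
          simp only [hPdef, if_pos hi, if_pos hi1, hk, Function.iterate_succ_apply']
          rw [Homeomorph.apply_symm_apply]
          simp [hδ₀.le]
        · have hi0 : i = -1 := by omega
          subst hi0
          simp only [hPdef, if_pos (show (-1:ℤ) < 0 by norm_num),
            if_neg (show ¬ ((-1:ℤ) + 1 < 0) by norm_num)]
          rw [show ((-(-1):ℤ)).toNat = 1 by norm_num, show (((-1:ℤ) + 1)).toNat = 0 by norm_num,
            Function.iterate_one, Nat.zero_div, Nat.zero_mod, hD0, Homeomorph.apply_symm_apply]
          simp [hδ₀.le]
    obtain ⟨zz, hzz⟩ := hshad P hchain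
    refine ⟨zz, fun j => ?_⟩
    have h := hzz (j : ℤ)
    rw [hPdef] at h
    simp only [iterZ, if_pos (Int.natCast_nonneg j), if_neg (show ¬ ((j:ℤ) < 0) by omega),
      Int.toNat_natCast] at h
    exact h
  choose z hzd using hz
  have hDt : D true n = (⇑f)^[n] y := by
    simp only [hDdef, cond_true, Nat.mod_eq_of_lt hnNB]
    exact loopB_n hn1
  have hDf : D false n = (⇑f)^[n] x := by
    simp only [hDdef, cond_false, Nat.mod_eq_of_lt hnNA]
    exact loopA_n
  have hsep : ∀ ω ω' : ℕ → Bool, ∀ t : ℕ, ω t ≠ ω' t →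
      3*ε/4 ≤ dist ((⇑f)^[N*t+n] (z ω)) ((⇑f)^[N*t+n] (z ω')) := by
    intro ω ω' t hne'
    have e1 : (N*t+n)/N = t := by rw [Nat.mul_add_div hN0, Nat.div_eq_of_lt hnN, add_zero]
    have e2 : (N*t+n)%N = n := by rw [Nat.mul_add_mod, Nat.mod_eq_of_lt hnN]
    have q1 := hzd ω (N*t+n)
    have q2 := hzd ω' (N*t+n)
    rw [e1, e2] at q1 q2
    have hd : ε ≤ dist (D (ω t) n) (D (ω' t) n) := by
      cases hb : ω t <;> cases hb' : ω' t
      · rw [hb, hb'] at hne'; exact absurd rfl hne'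
      · rw [hDf, hDt]; exact hn
      · rw [hDt, hDf, dist_comm]; exact hn
      · rw [hb, hb'] at hne'; exact absurd rfl hne'
    have tri := dist_triangle4 (D (ω t) n) ((⇑f)^[N*t+n] (z ω)) ((⇑f)^[N*t+n] (z ω')) (D (ω' t) n)
    have q1' : dist (D (ω t) n) ((⇑f)^[N*t+n] (z ω)) ≤ ε/8 := by rw [dist_comm]; exact q1
    have q2' : dist ((⇑f)^[N*t+n] (z ω')) (D (ω' t) n) ≤ ε/8 := q2
    linarith
  have hε' : (0:ℝ) < 3*ε/8 := by linarith
  have hcover : ∀ J : ℕ, 2^J ≤ coverNum (⇑f) (N*J+n) (3*ε/8) := by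
    intro J
    obtain ⟨S₀, hS₀⟩ := spanning_nonempty f.continuous (N*J+n) hε'
    have hne2 : {k : ℕ | ∃ S : Finset X, S.card = k ∧
        ∀ w : X, ∃ yy ∈ S, ∀ i ≤ N*J+n, dist ((⇑f)^[i] yy) ((⇑f)^[i] w) < 3*ε/8}.Nonempty :=
      ⟨S₀.card, S₀, rfl, hS₀⟩
    obtain ⟨S, hScard, hSspan⟩ := Nat.sInf_mem hne2
    have hch : ∀ w : Fin J → Bool, ∃ s ∈ S, ∀ i ≤ N*J+n,
        dist ((⇑f)^[i] s) ((⇑f)^[i] (z (fun t => if h : t < J then w ⟨t, h⟩ else false))) < 3*ε/8 :=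
      fun w => hSspan _
    choose φ hφS hφ using hch
    have hinj : Function.Injective φ := by
      intro w w' hww'
      by_contra hne3
      obtain ⟨t, ht⟩ := Function.ne_iff.mp hne3
      have hWt : (fun s => if h : s < J then w ⟨s, h⟩ else false) (t.1) ≠
          (fun s => if h : s < J then w' ⟨s, h⟩ else false) (t.1) := by
        simp only [dif_pos t.isLt]
        simpa using ht
      have hs := hsep (fun s => if h : s < J then w ⟨s, h⟩ else false)
        (fun s => if h : s < J then w' ⟨s, h⟩ else false) t.1 hWt
      have hi : N*t.1+n ≤ N*J+n := by
        have := Nat.mul_le_mul_left N (le_of_lt t.isLt)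
        omega
      have q1 := hφ w _ hi
      have q2 := hφ w' _ hi
      rw [hww'] at q1
      have tri := dist_triangle_left
        ((⇑f)^[N*t.1+n] (z (fun s => if h : s < J then w ⟨s, h⟩ else false)))
        ((⇑f)^[N*t.1+n] (z (fun s => if h : s < J then w' ⟨s, h⟩ else false)))
        ((⇑f)^[N*t.1+n] (φ w'))
      linarith
    have hcard : (Finset.univ : Finset (Fin J → Bool)).card ≤ S.card :=
      Finset.card_le_card_of_injOn φ (fun w _ => hφS w) hinj.injOn
    have huniv : (Finset.univ : Finset (Fin J → Bool)).card = 2^J := by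
      simp [Finset.card_univ]
    calc (2:ℕ)^J = (Finset.univ : Finset (Fin J → Bool)).card := huniv.symm
      _ ≤ S.card := hcard
      _ = coverNum (⇑f) (N*J+n) (3*ε/8) := hScard
  have hle2 : (Filter.atTop.limsup fun m : ℕ =>
      ENNReal.ofReal (Real.log (coverNum (⇑f) m (3*ε/8)) / m)) ≤ 0 := by
    have h := le_iSup₂ (f := fun (e : ℝ) (_ : 0 < e) =>
      Filter.atTop.limsup fun m : ℕ => ENNReal.ofReal (Real.log (coverNum (⇑f) m e) / m))
      (3*ε/8) hε'
    rw [show (⨆ (e : ℝ) (_ : 0 < e), Filter.atTop.limsup fun m : ℕ =>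
      ENNReal.ofReal (Real.log (coverNum (⇑f) m e) / m)) = topEntropy (⇑f) from rfl, hent] at h
    exact h
  have hNn0 : (0:ℝ) < (N:ℝ) + (n:ℝ) := by
    have : (0:ℝ) < (N:ℝ) := by exact_mod_cast hN0
    have : (0:ℝ) ≤ (n:ℝ) := by positivity
    linarith
  have hfreq : ∃ᶠ m in Filter.atTop, ENNReal.ofReal (Real.log 2 / ((N:ℝ) + (n:ℝ))) ≤
      ENNReal.ofReal (Real.log (coverNum (⇑f) m (3*ε/8)) / m) := by
    rw [Filter.frequently_atTop]
    intro M
    refine ⟨N*(M+1)+n, ?_, ?_⟩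
    · have h1 : M + 1 ≤ N*(M+1) := Nat.le_mul_of_pos_left _ hN0
      omega
    · apply ENNReal.ofReal_le_ofReal
      have hc := hcover (M+1)
      have hm1 : 0 < N*(M+1)+n := by
        have := Nat.mul_pos hN0 (Nat.succ_pos M)
        omega
      have hmR : (0:ℝ) < ((N*(M+1)+n : ℕ):ℝ) := by exact_mod_cast hm1
      have hcR : (2:ℝ)^(M+1) ≤ ((coverNum (⇑f) (N*(M+1)+n) (3*ε/8) : ℕ):ℝ) := by
        exact_mod_cast hc
      have hlog : ((M+1:ℕ):ℝ) * Real.log 2 ≤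
          Real.log (coverNum (⇑f) (N*(M+1)+n) (3*ε/8)) := by
        rw [← Real.log_pow]
        exact Real.log_le_log (by positivity) hcR
      rw [div_le_div_iff₀ hNn0 hmR]
      have hlog2 : 0 < Real.log 2 := Real.log_pos one_lt_two
      have hmle : ((N*(M+1)+n : ℕ):ℝ) ≤ ((M+1:ℕ):ℝ) * ((N:ℝ) + (n:ℝ)) := by
        push_cast
        nlinarith [show (0:ℝ) ≤ (M:ℝ) from by positivity, show (0:ℝ) ≤ (n:ℝ) from by positivity]
      calc Real.log 2 * ((N*(M+1)+n : ℕ):ℝ)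
          ≤ Real.log 2 * (((M+1:ℕ):ℝ) * ((N:ℝ) + (n:ℝ))) := by nlinarith
        _ = (((M+1:ℕ):ℝ) * Real.log 2) * ((N:ℝ) + (n:ℝ)) := by ring
        _ ≤ Real.log (coverNum (⇑f) (N*(M+1)+n) (3*ε/8)) * ((N:ℝ) + (n:ℝ)) := by nlinarith
  have hfin := Filter.le_limsup_of_frequently_le hfreq
  have hpos : (0:ℝ≥0∞) < ENNReal.ofReal (Real.log 2 / ((N:ℝ) + (n:ℝ))) :=
    ENNReal.ofReal_pos.mpr (div_pos (Real.log_pos one_lt_two) hNn0)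
  have hzero : ENNReal.ofReal (Real.log 2 / ((N:ℝ) + (n:ℝ))) = 0 :=
    le_antisymm (hfin.trans hle2) zero_le
  exact absurd hzero hpos.ne'
end

section
/- Let f : X → X be an equicontinuous homeomorphism of a compact metric space X. Then f admits no positively expansive Borel probability measure. -/
open MeasureTheory Set

/-- `f` is equicontinuous: for every `ε > 0` there is `δ > 0` such that
`δ`-close points stay `ε`-close under all forward iterates. -/
def EquicontinuousMap {X : Type*} [MetricSpace X] (f : X → X) : Prop :=
  ∀ ε > (0 : ℝ), ∃ δ > (0 : ℝ), ∀ x y : X, dist x y < δ →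
    ∀ i : ℕ, dist (f^[i] x) (f^[i] y) < ε

/-- An equicontinuous homeomorphism of a compact metric space has no positively
expansive Borel probability measure. -/
theorem not_exists_positivelyExpansive_of_equicontinuous
    {X : Type*} [MetricSpace X] [CompactSpace X] [MeasurableSpace X] [BorelSpace X]
    (f : X ≃ₜ X) (heq : EquicontinuousMap (⇑f)) :
    ¬ ∃ μ : Measure X, IsProbabilityMeasure μ ∧ IsPositivelyExpansive (⇑f) μ := by
  rintro ⟨μ, hμ, e, he, hzero⟩
  obtain ⟨δ, hδ, hδe⟩ := heq e he
  have hball : ∀ x : X, μ (Metric.ball x δ) = 0 := by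
    intro x
    refine measure_mono_null (fun y hy => ?_) (hzero x)
    exact fun i => (hδe x y (Metric.mem_ball'.mp hy) i).le
  obtain ⟨t, ht⟩ := (isCompact_univ (X := X)).elim_finite_subcover
    (fun x : X => Metric.ball x δ) (fun _ => Metric.isOpen_ball)
    (fun x _ => mem_iUnion.mpr ⟨x, Metric.mem_ball_self hδ⟩)
  have : μ univ = 0 := by
    refine measure_mono_null ht (le_antisymm ?_ zero_le)
    calc μ (⋃ x ∈ t, Metric.ball x δ) ≤ ∑ x ∈ t, μ (Metric.ball x δ) :=
          measure_biUnion_finset_le t _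
      _ = 0 := by simp [hball]
  simp [measure_univ] at this
end
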